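/- arXiv:1512.02302 — 10 statements merged into one kernel-verified Lean document; each statement's English description precedes it below -/
import Mathlib

section
/- Let μ : J → ℝ be piecewise continuous and periodic with period T > 0. Then μ is asymptotically stable if and only if there exists a constant c > 0 such that ∫_{t}^{t+T} μ(s) ds ≤ −c for all t ∈ J; moreover, in this case μ is in fact uniformly exponentially stable (so for a periodic μ, asymptotic stability, exponential stability and uniform exponential stability are all equivalent to the existence of such a c). -/
open Filter MeasureTheory Set

/-- for a piecewise continuous `μ : J → ℝ` that is periodic with period
`T > 0`, `μ` is asymptotically stable (`∫ s in t₀..t, μ s → -∞` for every `t₀ ∈ J`)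
iff there is `c > 0` with `∫ s in t..(t+T), μ s ≤ -c` for all `t ∈ J`; moreover in
this case `μ` is uniformly exponentially stable, i.e. there are `α > 0`, `β ≥ 0` with
`∫ s in t₀..t, μ s ≤ -α (t - t₀) + β` for all `t ≥ t₀ ∈ J`. -/
theorem stmt3 (tsharp T : ℝ) (hT : 0 < T) (μ : ℝ → ℝ)
    (hμ : ∀ a b : ℝ, IntervalIntegrable μ MeasureTheory.volume a b)
    (hper : ∀ t ∈ Set.Ici tsharp, μ (t + T) = μ t) :
    ((∀ t₀ ∈ Set.Ici tsharp,
        Filter.Tendsto (fun t => ∫ s in t₀..t, μ s) Filter.atTop Filter.atBot) ↔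
      (∃ c : ℝ, 0 < c ∧ ∀ t ∈ Set.Ici tsharp, (∫ s in t..(t + T), μ s) ≤ -c)) ∧
    ((∃ c : ℝ, 0 < c ∧ ∀ t ∈ Set.Ici tsharp, (∫ s in t..(t + T), μ s) ≤ -c) →
      ∃ α : ℝ, 0 < α ∧ ∃ β : ℝ, 0 ≤ β ∧ ∀ t₀ ∈ Set.Ici tsharp, ∀ t ≥ t₀,
        (∫ s in t₀..t, μ s) ≤ -α * (t - t₀) + β) := by
  have hT' : T ≠ 0 := hT.ne'
  set I : ℝ := ∫ s in tsharp..(tsharp + T), μ s with hIdef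
  -- shift by T
  have shiftA : ∀ a b : ℝ, tsharp ≤ a → tsharp ≤ b →
      (∫ s in (a + T)..(b + T), μ s) = ∫ s in a..b, μ s := by
    intro a b ha hb
    rw [← intervalIntegral.integral_comp_add_right (fun s => μ s) T]
    refine intervalIntegral.integral_congr fun s hs => ?_
    exact hper s (le_trans (le_min ha hb) hs.1)
  -- shift by n*T
  have shiftN : ∀ n : ℕ, ∀ a b : ℝ, tsharp ≤ a → tsharp ≤ b →
      (∫ s in (a + n * T)..(b + n * T), μ s) = ∫ s in a..b, μ s := by
    intro n
    induction n with
    | zero => intro a b _ _; norm_num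
    | succ n ih =>
      intro a b ha hb
      have hnT : (0:ℝ) ≤ (n:ℝ) * T := by positivity
      have h1 : a + (n + 1 : ℕ) * T = (a + n * T) + T := by push_cast; ring
      have h2 : b + (n + 1 : ℕ) * T = (b + n * T) + T := by push_cast; ring
      rw [h1, h2, shiftA (a + n * T) (b + n * T) (by linarith) (by linarith),
        ih a b ha hb]
  -- the integral over a period is constant
  have constF : ∀ t : ℝ, tsharp ≤ t → (∫ s in t..(t + T), μ s) = I := by
    intro t ht
    have h1 : (∫ s in tsharp..t, μ s) + (∫ s in t..(t + T), μ s)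
        = ∫ s in tsharp..(t + T), μ s :=
      intervalIntegral.integral_add_adjacent_intervals (hμ _ _) (hμ _ _)
    have h2 : (∫ s in tsharp..(tsharp + T), μ s) + (∫ s in (tsharp + T)..(t + T), μ s)
        = ∫ s in tsharp..(t + T), μ s :=
      intervalIntegral.integral_add_adjacent_intervals (hμ _ _) (hμ _ _)
    have h3 : (∫ s in (tsharp + T)..(t + T), μ s) = ∫ s in tsharp..t, μ s :=
      shiftA tsharp t le_rfl ht
    rw [h3] at h2
    linarith [h1, h2]
  -- integral over n periods
  have sumN : ∀ n : ℕ, ∀ t : ℝ, tsharp ≤ t →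
      (∫ s in t..(t + n * T), μ s) = n * I := by
    intro n
    induction n with
    | zero => intro t _; norm_num
    | succ n ih =>
      intro t ht
      have hnT : (0:ℝ) ≤ (n:ℝ) * T := by positivity
      have h1 : (∫ s in t..(t + n * T), μ s) + (∫ s in (t + n * T)..(t + (n+1:ℕ) * T), μ s)
          = ∫ s in t..(t + (n+1:ℕ) * T), μ s :=
        intervalIntegral.integral_add_adjacent_intervals (hμ _ _) (hμ _ _)
      have h2 : t + (n + 1 : ℕ) * T = (t + n * T) + T := by push_cast; ring
      have h3 : (∫ s in (t + n * T)..(t + (n+1:ℕ) * T), μ s) = I := by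
        rw [h2]; exact constF (t + n * T) (by linarith)
      rw [← h1, ih t ht, h3]; push_cast; ring
  -- bound on integrals within [tsharp, tsharp + 2T]
  set Bnd : ℝ := ∫ s in tsharp..(tsharp + 2 * T), |μ s| with hBnd
  have hBnd0 : 0 ≤ Bnd := by
    apply intervalIntegral.integral_nonneg (by linarith)
    intro x _; positivity
  have bnd : ∀ a b : ℝ, tsharp ≤ a → a ≤ b → b ≤ tsharp + 2 * T →
      (∫ s in a..b, μ s) ≤ Bnd := by
    intro a b ha hab hb
    have h1 : (∫ s in a..b, μ s) ≤ ∫ s in a..b, |μ s| :=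
      intervalIntegral.integral_mono_on hab (hμ a b) (hμ a b).abs
        (fun x _ => le_abs_self _)
    have h2 : (∫ s in a..b, |μ s|) ≤ Bnd := by
      apply intervalIntegral.integral_mono_interval ha hab hb
      · filter_upwards with x; positivity
      · exact (hμ _ _).abs
    linarith
  -- main uniform exponential stability statement
  have ues : (∃ c : ℝ, 0 < c ∧ ∀ t ∈ Set.Ici tsharp, (∫ s in t..(t + T), μ s) ≤ -c) →
      ∃ α : ℝ, 0 < α ∧ ∃ β : ℝ, 0 ≤ β ∧ ∀ t₀ ∈ Set.Ici tsharp, ∀ t ≥ t₀,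
        (∫ s in t₀..t, μ s) ≤ -α * (t - t₀) + β := by
    rintro ⟨c₀, hc₀, hc⟩
    have hI : I ≤ -c₀ := by
      rw [← constF tsharp le_rfl]; exact hc tsharp Set.self_mem_Ici
    set c : ℝ := -I with hcdef
    have hcpos : 0 < c := by rw [hcdef]; linarith
    refine ⟨c / T, by positivity, Bnd + c, by linarith, ?_⟩
    intro t₀ ht₀ t ht
    simp only [Set.mem_Ici] at ht₀
    set n : ℕ := ⌊(t - t₀) / T⌋₊ with hn
    have hn1 : (n : ℝ) * T ≤ t - t₀ := by
      rw [hn]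
      calc ((⌊(t - t₀)/T⌋₊ : ℕ) : ℝ) * T ≤ ((t - t₀)/T) * T :=
            mul_le_mul_of_nonneg_right
              (Nat.floor_le (div_nonneg (by linarith) hT.le)) hT.le
        _ = t - t₀ := div_mul_cancel₀ _ hT'
    have hn2 : t - t₀ < ((n : ℝ) + 1) * T := by
      rw [hn]
      calc t - t₀ = ((t - t₀)/T) * T := (div_mul_cancel₀ _ hT').symm
        _ < (((⌊(t - t₀)/T⌋₊ : ℕ) : ℝ) + 1) * T :=
            mul_lt_mul_of_pos_right (Nat.lt_floor_add_one _) hT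
    set m : ℕ := ⌊(t₀ - tsharp) / T⌋₊ with hm
    have hm1 : (m : ℝ) * T ≤ t₀ - tsharp := by
      rw [hm]
      calc ((⌊(t₀ - tsharp)/T⌋₊ : ℕ) : ℝ) * T ≤ ((t₀ - tsharp)/T) * T :=
            mul_le_mul_of_nonneg_right
              (Nat.floor_le (div_nonneg (by linarith) hT.le)) hT.le
        _ = t₀ - tsharp := div_mul_cancel₀ _ hT'
    have hm2 : t₀ - tsharp < ((m : ℝ) + 1) * T := by
      rw [hm]
      calc t₀ - tsharp = ((t₀ - tsharp)/T) * T := (div_mul_cancel₀ _ hT').symm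
        _ < (((⌊(t₀ - tsharp)/T⌋₊ : ℕ) : ℝ) + 1) * T :=
            mul_lt_mul_of_pos_right (Nat.lt_floor_add_one _) hT
    set u : ℝ := t₀ - m * T with hu
    have hu1 : tsharp ≤ u := by rw [hu]; linarith
    have hu2 : u < tsharp + T := by rw [hu]; nlinarith
    -- split the integral
    have split : (∫ s in t₀..(t₀ + n * T), μ s) + (∫ s in (t₀ + n * T)..t, μ s)
        = ∫ s in t₀..t, μ s :=
      intervalIntegral.integral_add_adjacent_intervals (hμ _ _) (hμ _ _)
    have part1 : (∫ s in t₀..(t₀ + n * T), μ s) = n * I := sumN n t₀ ht₀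
    have htn : tsharp ≤ t - n * T := by linarith
    have part2a : (∫ s in (t₀ + n * T)..t, μ s) = ∫ s in t₀..(t - n * T), μ s := by
      have h := shiftN n t₀ (t - n * T) ht₀ htn
      have he : (t - (n : ℝ) * T) + n * T = t := by ring
      rw [he] at h; exact h
    have part2b : (∫ s in t₀..(t - n * T), μ s) = ∫ s in u..(t - n * T - m * T), μ s := by
      have h := shiftN m u (t - n * T - m * T) hu1 (by linarith)
      have he1 : u + (m : ℝ) * T = t₀ := by rw [hu]; ring
      have he2 : (t - (n : ℝ) * T - m * T) + m * T = t - n * T := by ring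
      rw [he1, he2] at h; exact h
    have part2 : (∫ s in (t₀ + n * T)..t, μ s) ≤ Bnd := by
      rw [part2a, part2b]
      apply bnd u (t - n * T - m * T) hu1
      · linarith [hu, hn1]
      · nlinarith [hu, hn2, hu2]
    have key : (∫ s in t₀..t, μ s) ≤ n * I + Bnd := by
      rw [← split, part1]; linarith
    have hfin : (n : ℝ) * I + Bnd ≤ -(c / T) * (t - t₀) + (Bnd + c) := by
      have hdiv : c / T * T = c := div_mul_cancel₀ c hT'
      have h1 : (c / T) * (t - t₀) ≤ (c / T) * (((n : ℝ) + 1) * T) :=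
        mul_le_mul_of_nonneg_left hn2.le (by positivity)
      have h2 : (c / T) * (((n : ℝ) + 1) * T) = ((n : ℝ) + 1) * c := by
        field_simp
      have hnI : (n : ℝ) * I = -((n : ℝ) * c) := by rw [hcdef]; ring
      rw [hnI]; nlinarith
    linarith
  constructor
  · constructor
    · -- asymptotic stability → ∃ c
      intro hAS
      refine ⟨-I, ?_, fun t ht => by rw [constF t ht, neg_neg]⟩
      by_contra hne
      push_neg at hne
      have hI0 : 0 ≤ I := by linarith
      have h := hAS tsharp Set.self_mem_Ici
      obtain ⟨N, hN⟩ := (h.eventually (eventually_le_atBot (-1))).exists_forall_of_atTop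
      set n : ℕ := ⌈(N - tsharp) / T⌉₊ with hn
      have hnN : N ≤ tsharp + n * T := by
        have h1 : (N - tsharp) / T ≤ (n : ℝ) := Nat.le_ceil _
        have h2 : N - tsharp ≤ (n : ℝ) * T := by
          rw [div_le_iff₀ hT] at h1; linarith
        linarith
      have h3 := hN (tsharp + n * T) hnN
      rw [sumN n tsharp le_rfl] at h3
      nlinarith [mul_nonneg (Nat.cast_nonneg (α := ℝ) n) hI0]
    · -- ∃ c → asymptotic stability
      intro hc t₀ ht₀
      obtain ⟨α, hα, β, hβ, hub⟩ := ues hc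
      apply Filter.tendsto_atBot_mono' atTop
        (f₁ := fun t => -α * (t - t₀) + β)
      · filter_upwards [Filter.eventually_ge_atTop t₀] with t ht
        exact hub t₀ ht₀ t ht
      · apply tendsto_atBot_add_const_right
        exact Filter.Tendsto.const_mul_atTop_of_neg (by linarith)
          (tendsto_atTop_add_const_right _ _ tendsto_id)
  · exact ues
end

section
/- (Theorem 1, Item 1) Suppose there exist a continuously differentiable V : J × ℝⁿ → [0,∞), two class-NK∞ functions α₁, α₂, and a piecewise continuous μ : J → ℝ such that α₁(t,|x|) ≤ V(t,x) ≤ α₂(t,|x|) and ∂V/∂t(t,x) + ∇ₓV(t,x)·f(t,x) ≤ μ(t)V(t,x) for all (t,x) ∈ J × ℝⁿ. If μ is asymptotically stable, i.e. lim_{t→∞} ∫_{t₀}^{t} μ(s) ds = −∞ for every t₀ ∈ J, then the system ẋ = f(t,x) is globally asymptotically stable: (a) for every t₀ ∈ J and ε > 0 there exists δ(t₀,ε) > 0 such that every solution with |x(t₀)| ≤ δ(t₀,ε) satisfies |x(t)| ≤ ε for all t ≥ t₀; and (b) every solution converges to 0 as t → ∞. -/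
open Filter MeasureTheory Set


lemma gron_pos {μ v v' : ℝ → ℝ} {a b : ℝ} (hab : a ≤ b)
    (hv : ∀ t ∈ Set.Icc a b, HasDerivAt v (v' t) t)
    (hv'c : ContinuousOn v' (Set.Icc a b))
    (hpos : ∀ t ∈ Set.Icc a b, 0 < v t)
    (hle : ∀ t ∈ Set.Icc a b, v' t ≤ μ t * v t)
    (hμ : IntervalIntegrable μ MeasureTheory.volume a b) :
    v b ≤ v a * Real.exp (∫ s in a..b, μ s) := by
  have hvc : ContinuousOn v (Set.Icc a b) := fun t ht =>
    ((hv t ht).continuousAt).continuousWithinAt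
  have hqc : ContinuousOn (fun t => v' t / v t) (Set.Icc a b) :=
    hv'c.div hvc (fun t ht => (hpos t ht).ne')
  have hqint : IntervalIntegrable (fun t => v' t / v t) MeasureTheory.volume a b :=
    hqc.intervalIntegrable_of_Icc hab
  have hlog : ∀ t ∈ Set.uIcc a b, HasDerivAt (fun s => Real.log (v s)) (v' t / v t) t := by
    intro t ht
    rw [Set.uIcc_of_le hab] at ht
    exact (hv t ht).log (hpos t ht).ne'
  have heq := intervalIntegral.integral_eq_sub_of_hasDerivAt hlog hqint
  have hmono := intervalIntegral.integral_mono_on hab hqint hμ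
    (fun t ht => (div_le_iff₀ (hpos t ht)).mpr (hle t ht))
  have hb := hpos b (Set.right_mem_Icc.mpr hab)
  have ha := hpos a (Set.left_mem_Icc.mpr hab)
  calc v b = Real.exp (Real.log (v b)) := (Real.exp_log hb).symm
    _ ≤ Real.exp (Real.log (v a) + ∫ s in a..b, μ s) := by
        apply Real.exp_le_exp.mpr
        rw [heq] at hmono; linarith
    _ = v a * Real.exp (∫ s in a..b, μ s) := by rw [Real.exp_add, Real.exp_log ha]

lemma gron {μ v v' : ℝ → ℝ} {a b : ℝ} (hab : a ≤ b)
    (hv : ∀ t ∈ Set.Icc a b, HasDerivAt v (v' t) t)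
    (hv'c : ContinuousOn v' (Set.Icc a b))
    (hnn : ∀ t ∈ Set.Icc a b, 0 ≤ v t)
    (hle : ∀ t ∈ Set.Icc a b, v' t ≤ μ t * v t)
    (hμ : ∀ a b : ℝ, IntervalIntegrable μ MeasureTheory.volume a b) :
    v b ≤ v a * Real.exp (∫ s in a..b, μ s) := by
  have hvc : ContinuousOn v (Set.Icc a b) := fun t ht =>
    ((hv t ht).continuousAt).continuousWithinAt
  rcases eq_or_lt_of_le (hnn b (Set.right_mem_Icc.mpr hab)) with hvb | hvb
  · rw [← hvb]
    exact mul_nonneg (hnn a (Set.left_mem_Icc.mpr hab)) (Real.exp_pos _).le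
  by_cases hz : ∃ s ∈ Set.Icc a b, v s = 0
  · exfalso
    set Z : Set ℝ := Set.Icc a b ∩ v ⁻¹' {0} with hZdef
    have hZclosed : IsClosed Z :=
      hvc.preimage_isClosed_of_isClosed isClosed_Icc isClosed_singleton
    have hZne : Z.Nonempty := by
      obtain ⟨s, hs, hvs⟩ := hz; exact ⟨s, hs, by simpa using hvs⟩
    have hZbdd : BddAbove Z := ⟨b, fun z hz => hz.1.2⟩
    set c := sSup Z with hcdef
    have hcZ : c ∈ Z := hZclosed.csSup_mem hZne hZbdd
    have hcIcc : c ∈ Set.Icc a b := hcZ.1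
    have hvc0 : v c = 0 := by simpa using hcZ.2
    have hcb : c < b := hcIcc.2.lt_of_ne (fun h => by
      rw [h] at hvc0; rw [hvc0] at hvb; exact lt_irrefl _ hvb)
    have key : ∀ s ∈ Set.Ioc c b, v b ≤ v s * Real.exp (∫ u in s..b, μ u) := by
      intro s hs
      have hsIcc : Set.Icc s b ⊆ Set.Icc a b :=
        Set.Icc_subset_Icc (hcIcc.1.trans hs.1.le) le_rfl
      refine gron_pos hs.2 (fun t ht => hv t (hsIcc ht)) (hv'c.mono hsIcc) ?_
        (fun t ht => hle t (hsIcc ht)) (hμ s b)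
      intro t ht
      rcases lt_or_eq_of_le (hnn t (hsIcc ht)) with h | h
      · exact h
      · exfalso
        have htZ : t ∈ Z := ⟨hsIcc ht, by simp [← h]⟩
        have : t ≤ c := le_csSup hZbdd htZ
        exact absurd (lt_of_lt_of_le hs.1 (ht.1.trans this)) (lt_irrefl _)
    have hIcont : Continuous fun s => ∫ u in s..b, μ u := by
      have h1 : Continuous fun s => ∫ u in b..s, μ u := intervalIntegral.continuous_primitive hμ b
      have : (fun s => ∫ u in s..b, μ u) = fun s => -(∫ u in b..s, μ u) := by
        funext s; rw [intervalIntegral.integral_symm]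
      rw [this]; exact h1.neg
    have hg : Filter.Tendsto (fun s => v s * Real.exp (∫ u in s..b, μ u))
        (nhdsWithin c (Set.Ioi c)) (nhds (v c * Real.exp (∫ u in c..b, μ u))) := by
      have hvca : ContinuousAt v c := (hv c hcIcc).continuousAt
      exact Filter.Tendsto.mul (hvca.continuousWithinAt)
        (((Real.continuous_exp.comp hIcont).continuousAt).continuousWithinAt)
    have hev : ∀ᶠ s in nhdsWithin c (Set.Ioi c), v b ≤ v s * Real.exp (∫ u in s..b, μ u) := by
      filter_upwards [Ioc_mem_nhdsGT hcb] with s hs using key s hs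
    have hlim : v b ≤ v c * Real.exp (∫ u in c..b, μ u) := ge_of_tendsto hg hev
    rw [hvc0, zero_mul] at hlim
    exact absurd (lt_of_lt_of_le hvb hlim) (lt_irrefl _)
  · push_neg at hz
    exact gron_pos hab hv hv'c
      (fun t ht => lt_of_le_of_ne (hnn t ht) (Ne.symm (hz t ht))) hle (hμ a b)

/-- Theorem 1, Item 1: if there are a `C¹` nonnegative `V`, class-`NK∞`
functions `α₁, α₂` sandwiching `V`, and a piecewise continuous `μ` with
`∂V/∂t + ∇ₓV ⬝ f ≤ μ V` on `J × ℝⁿ`, and `μ` is asymptotically stable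
(`∫ s in t₀..t, μ s → -∞` for every `t₀ ∈ J`), then `ẋ = f(t,x)` is globally
asymptotically stable: Lyapunov stability plus global attractivity. -/
theorem stmt4 (tsharp : ℝ) (n : ℕ)
    (f : ℝ → EuclideanSpace ℝ (Fin n) → EuclideanSpace ℝ (Fin n))
    (hf_cont : Continuous fun p : ℝ × EuclideanSpace ℝ (Fin n) => f p.1 p.2)
    (hf_lip : ∀ t, LocallyLipschitz (f t))
    (hf0 : ∀ t ∈ Set.Ici tsharp, f t (0 : EuclideanSpace ℝ (Fin n)) = 0)
    (V : ℝ → EuclideanSpace ℝ (Fin n) → ℝ)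
    (hV_C1 : ContDiff ℝ 1 fun p : ℝ × EuclideanSpace ℝ (Fin n) => V p.1 p.2)
    (hV_nonneg : ∀ t ∈ Set.Ici tsharp, ∀ x : EuclideanSpace ℝ (Fin n), 0 ≤ V t x)
    (α₁ α₂ : ℝ → ℝ → ℝ)
    -- `α₁, α₂` are of class `NK∞` : for each fixed `t ∈ J`, `s ↦ αᵢ t s` is of class `K∞`
    (hα₁K : ∀ t ∈ Set.Ici tsharp, ContinuousOn (α₁ t) (Set.Ici 0) ∧
        StrictMonoOn (α₁ t) (Set.Ici 0) ∧ α₁ t 0 = 0 ∧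
        Filter.Tendsto (α₁ t) Filter.atTop Filter.atTop)
    (hα₂K : ∀ t ∈ Set.Ici tsharp, ContinuousOn (α₂ t) (Set.Ici 0) ∧
        StrictMonoOn (α₂ t) (Set.Ici 0) ∧ α₂ t 0 = 0 ∧
        Filter.Tendsto (α₂ t) Filter.atTop Filter.atTop)
    -- and for each fixed `s ≥ 0`, `t ↦ αᵢ t s` is nondecreasing on `J`
    (hα₁N : ∀ s ≥ (0:ℝ), MonotoneOn (fun t => α₁ t s) (Set.Ici tsharp))
    (hα₂N : ∀ s ≥ (0:ℝ), MonotoneOn (fun t => α₂ t s) (Set.Ici tsharp))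
    (μ : ℝ → ℝ)
    (hμ_int : ∀ a b : ℝ, IntervalIntegrable μ MeasureTheory.volume a b)
    (hsandwich : ∀ t ∈ Set.Ici tsharp, ∀ x : EuclideanSpace ℝ (Fin n),
        α₁ t ‖x‖ ≤ V t x ∧ V t x ≤ α₂ t ‖x‖)
    (hderiv : ∀ t ∈ Set.Ici tsharp, ∀ x : EuclideanSpace ℝ (Fin n),
        (fderiv ℝ (fun p : ℝ × EuclideanSpace ℝ (Fin n) => V p.1 p.2) (t, x)) (1, f t x)
          ≤ μ t * V t x)
    (hμ_as : ∀ t₀ ∈ Set.Ici tsharp,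
        Filter.Tendsto (fun t => ∫ s in t₀..t, μ s) Filter.atTop Filter.atBot) :
    -- (a) Lyapunov stability
    (∀ t₀ ∈ Set.Ici tsharp, ∀ ε > (0:ℝ), ∃ δ > (0:ℝ),
        ∀ x : ℝ → EuclideanSpace ℝ (Fin n),
          (∀ t ≥ t₀, HasDerivAt x (f t (x t)) t) →
          ‖x t₀‖ ≤ δ → ∀ t ≥ t₀, ‖x t‖ ≤ ε) ∧
    -- (b) global attractivity
    (∀ t₀ ∈ Set.Ici tsharp, ∀ x : ℝ → EuclideanSpace ℝ (Fin n),
        (∀ t ≥ t₀, HasDerivAt x (f t (x t)) t) →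
        Filter.Tendsto x Filter.atTop (nhds 0)) := by
  have hVd : Differentiable ℝ (fun p : ℝ × EuclideanSpace ℝ (Fin n) => V p.1 p.2) :=
    hV_C1.differentiable one_ne_zero
  have hfderiv_cont : Continuous (fderiv ℝ (fun p : ℝ × EuclideanSpace ℝ (Fin n) => V p.1 p.2)) :=
    hV_C1.continuous_fderiv one_ne_zero
  have KEY : ∀ t₀ ∈ Set.Ici tsharp, ∀ x : ℝ → EuclideanSpace ℝ (Fin n),
      (∀ t ≥ t₀, HasDerivAt x (f t (x t)) t) →
      ∀ t ≥ t₀, V t (x t) ≤ V t₀ (x t₀) * Real.exp (∫ s in t₀..t, μ s) := by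
    intro t₀ ht₀ x hx t ht
    set v' : ℝ → ℝ := fun s =>
      (fderiv ℝ (fun p : ℝ × EuclideanSpace ℝ (Fin n) => V p.1 p.2) (s, x s)) (1, f s (x s))
      with hv'def
    have hderiv_v : ∀ s ∈ Set.Icc t₀ t, HasDerivAt (fun u => V u (x u)) (v' s) s := by
      intro s hs
      have hγ : HasDerivAt (fun u => ((u : ℝ), x u)) ((1 : ℝ), f s (x s)) s :=
        (hasDerivAt_id s).prodMk (hx s hs.1)
      exact ((hVd (s, x s)).hasFDerivAt).comp_hasDerivAt s hγ
    have hxc : ContinuousOn x (Set.Icc t₀ t) := fun s hs =>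
      ((hx s hs.1).continuousAt).continuousWithinAt
    have hγc : ContinuousOn (fun u => ((u : ℝ), x u)) (Set.Icc t₀ t) :=
      (continuousOn_id).prodMk hxc
    have hv'c : ContinuousOn v' (Set.Icc t₀ t) := by
      apply ContinuousOn.clm_apply (hfderiv_cont.comp_continuousOn hγc)
      exact (continuousOn_const).prodMk (hf_cont.comp_continuousOn hγc)
    have hnn : ∀ s ∈ Set.Icc t₀ t, 0 ≤ V s (x s) := fun s hs =>
      hV_nonneg s (le_trans ht₀ hs.1) (x s)
    have hle : ∀ s ∈ Set.Icc t₀ t, v' s ≤ μ s * V s (x s) := fun s hs =>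
      hderiv s (le_trans ht₀ hs.1) (x s)
    exact gron ht hderiv_v hv'c hnn hle hμ_int
  constructor
  · -- Lyapunov stability
    intro t₀ ht₀ ε hε
    set I : ℝ → ℝ := fun t => ∫ s in t₀..t, μ s with hIdef
    have hIcont : Continuous I := intervalIntegral.continuous_primitive hμ_int t₀
    obtain ⟨T, hT⟩ := (Filter.eventually_atTop).mp ((hμ_as t₀ ht₀).eventually_le_atBot 0)
    obtain ⟨tm, htm, htmax⟩ := isCompact_Icc.exists_isMaxOn
      (Set.nonempty_Icc.mpr (le_max_right T t₀) : (Set.Icc t₀ (max T t₀)).Nonempty)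
      (hIcont.continuousOn)
    set M := max (I tm) 0 with hMdef
    have hexpM : (0:ℝ) < Real.exp M := Real.exp_pos M
    have hIM : ∀ t ≥ t₀, I t ≤ M := by
      intro t htt
      rcases le_or_gt t (max T t₀) with h | h
      · exact le_trans (htmax ⟨htt, h⟩) (le_max_left _ _)
      · exact le_trans (hT t (le_trans (le_max_left T t₀) h.le)) (le_max_right _ _)
    obtain ⟨hα₁c, hα₁m, hα₁0, -⟩ := hα₁K t₀ ht₀
    obtain ⟨hα₂c, hα₂m, hα₂0, -⟩ := hα₂K t₀ ht₀
    have hεpos : 0 < α₁ t₀ ε := by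
      rw [← hα₁0]
      exact hα₁m Set.self_mem_Ici (Set.mem_Ici.mpr hε.le) hε
    have hcw : ContinuousWithinAt (α₂ t₀) (Set.Ici 0) 0 := hα₂c 0 Set.self_mem_Ici
    rw [Metric.continuousWithinAt_iff] at hcw
    obtain ⟨δ₀, hδ₀pos, hδ₀⟩ := hcw (α₁ t₀ ε / Real.exp M) (by positivity)
    refine ⟨δ₀ / 2, by positivity, ?_⟩
    intro x hx hxδ t htt
    have htsh : t ∈ Set.Ici tsharp := le_trans ht₀ htt
    have hα₂x : α₂ t₀ ‖x t₀‖ < α₁ t₀ ε / Real.exp M := by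
      have h1 : dist ‖x t₀‖ (0:ℝ) < δ₀ := by
        rw [Real.dist_eq, sub_zero, abs_of_nonneg (norm_nonneg _)]
        linarith
      have h2 := hδ₀ (Set.mem_Ici.mpr (norm_nonneg (x t₀))) h1
      rw [Real.dist_eq, hα₂0, sub_zero] at h2
      have h3 : 0 ≤ α₂ t₀ ‖x t₀‖ := by
        rw [← hα₂0]
        exact hα₂m.monotoneOn Set.self_mem_Ici (Set.mem_Ici.mpr (norm_nonneg _)) (norm_nonneg _)
      rwa [abs_of_nonneg h3] at h2
    have hα₂nn : 0 ≤ α₂ t₀ ‖x t₀‖ := by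
      rw [← hα₂0]
      exact hα₂m.monotoneOn Set.self_mem_Ici (Set.mem_Ici.mpr (norm_nonneg _)) (norm_nonneg _)
    have hchain : α₁ t₀ ‖x t‖ < α₁ t₀ ε := by
      have c1 : α₁ t₀ ‖x t‖ ≤ α₁ t ‖x t‖ :=
        hα₁N ‖x t‖ (norm_nonneg _) ht₀ htsh htt
      have c2 : α₁ t ‖x t‖ ≤ V t (x t) := (hsandwich t htsh (x t)).1
      have c3 : V t (x t) ≤ V t₀ (x t₀) * Real.exp (I t) := KEY t₀ ht₀ x hx t htt
      have c4 : V t₀ (x t₀) * Real.exp (I t) ≤ α₂ t₀ ‖x t₀‖ * Real.exp (I t) :=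
        mul_le_mul_of_nonneg_right (hsandwich t₀ ht₀ (x t₀)).2 (Real.exp_pos _).le
      have c5 : α₂ t₀ ‖x t₀‖ * Real.exp (I t) ≤ α₂ t₀ ‖x t₀‖ * Real.exp M :=
        mul_le_mul_of_nonneg_left (Real.exp_le_exp.mpr (hIM t htt)) hα₂nn
      have c6 : α₂ t₀ ‖x t₀‖ * Real.exp M < (α₁ t₀ ε / Real.exp M) * Real.exp M :=
        mul_lt_mul_of_pos_right hα₂x hexpM
      have c7 : (α₁ t₀ ε / Real.exp M) * Real.exp M = α₁ t₀ ε :=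
        div_mul_cancel₀ _ hexpM.ne'
      linarith
    by_contra hcon
    push_neg at hcon
    have := hα₁m (Set.mem_Ici.mpr hε.le) (Set.mem_Ici.mpr (norm_nonneg (x t))) hcon
    linarith
  · -- global attractivity
    intro t₀ ht₀ x hx
    obtain ⟨hα₁c, hα₁m, hα₁0, -⟩ := hα₁K t₀ ht₀
    rw [Metric.tendsto_atTop]
    intro ε hε
    have hεpos : 0 < α₁ t₀ ε := by
      rw [← hα₁0]
      exact hα₁m Set.self_mem_Ici (Set.mem_Ici.mpr hε.le) hε
    have hlim : Filter.Tendsto (fun t => V t₀ (x t₀) * Real.exp (∫ s in t₀..t, μ s))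
        Filter.atTop (nhds 0) := by
      have := (Real.tendsto_exp_atBot.comp (hμ_as t₀ ht₀)).const_mul (V t₀ (x t₀))
      simpa using this
    have hev : ∀ᶠ t in Filter.atTop,
        V t₀ (x t₀) * Real.exp (∫ s in t₀..t, μ s) < α₁ t₀ ε :=
      hlim.eventually (Filter.Tendsto.eventually_lt_const hεpos Filter.tendsto_id)
    obtain ⟨N, hN⟩ := (Filter.eventually_atTop).mp (hev.and (Filter.eventually_ge_atTop t₀))
    refine ⟨N, fun t htN => ?_⟩
    obtain ⟨h1, htt⟩ := hN t htN
    have htsh : t ∈ Set.Ici tsharp := le_trans ht₀ htt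
    rw [dist_zero_right]
    by_contra hcon
    push_neg at hcon
    have c1 : α₁ t₀ ε ≤ α₁ t₀ ‖x t‖ :=
      hα₁m.monotoneOn (Set.mem_Ici.mpr hε.le) (Set.mem_Ici.mpr (norm_nonneg _)) hcon
    have c2 : α₁ t₀ ‖x t‖ ≤ α₁ t ‖x t‖ :=
      hα₁N ‖x t‖ (norm_nonneg _) ht₀ htsh htt
    have c3 : α₁ t ‖x t‖ ≤ V t (x t) := (hsandwich t htsh (x t)).1
    have c4 := KEY t₀ ht₀ x hx t htt
    linarith
end

section
/- (Theorem 1, Item 2) Suppose there exist a continuously differentiable V : J × ℝⁿ → [0,∞), two class-K∞ functions α₁, α₂ (independent of t), and a piecewise continuous μ : J → ℝ such that α₁(|x|) ≤ V(t,x) ≤ α₂(|x|) and ∂V/∂t(t,x) + ∇ₓV(t,x)·f(t,x) ≤ μ(t)V(t,x) for all (t,x) ∈ J × ℝⁿ. If μ is uniformly exponentially stable with constants α > 0 and β ≥ 0 (i.e., ∫_{t₀}^{t} μ(s) ds ≤ −α(t−t₀) + β for all t ≥ t₀ ∈ J), then every solution of ẋ = f(t,x) satisfies |x(t)| ≤ α₁⁻¹(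 α₂(|x(t₀)|)·e^{β}·e^{−α(t−t₀)} ) for all t ≥ t₀ ∈ J; in particular the system is globally uniformly asymptotically stable. -/
open Filter MeasureTheory Set Topology

open Filter MeasureTheory Set Topology

/-- log-step: Grönwall via logarithm on an interval where `W > 0`. -/
lemma gron_log_step (W W' μ : ℝ → ℝ) (a b : ℝ) (hab : a ≤ b)
    (hW : ∀ u ∈ Icc a b, HasDerivAt W (W' u) u)
    (hW'cont : ContinuousOn W' (Icc a b))
    (hWpos : ∀ u ∈ Icc a b, 0 < W u)
    (hle : ∀ u ∈ Icc a b, W' u ≤ μ u * W u)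
    (hμ : IntervalIntegrable μ volume a b) :
    Real.log (W b) - Real.log (W a) ≤ ∫ s in a..b, μ s := by
  have hWcont : ContinuousOn W (Icc a b) := fun u hu => (hW u hu).continuousAt.continuousWithinAt
  have hquot_cont : ContinuousOn (fun u => W' u / W u) (Icc a b) :=
    hW'cont.div hWcont (fun u hu => ne_of_gt (hWpos u hu))
  have hInt : IntervalIntegrable (fun u => W' u / W u) volume a b :=
    (hquot_cont.mono (by rw [uIcc_of_le hab])).intervalIntegrable
  have hlog : ∀ u ∈ uIcc a b, HasDerivAt (fun v => Real.log (W v)) (W' u / W u) u := by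
    intro u hu
    rw [uIcc_of_le hab] at hu
    exact (hW u hu).log (ne_of_gt (hWpos u hu))
  have hftc := intervalIntegral.integral_eq_sub_of_hasDerivAt hlog hInt
  rw [← hftc]
  refine intervalIntegral.integral_mono_on hab hInt hμ (fun u hu => ?_)
  exact (div_le_iff₀ (hWpos u hu)).mpr (hle u hu)

/-- Key Grönwall-type lemma with nonnegativity instead of uniqueness. -/
lemma gron_key (t₀ : ℝ) (W W' μ : ℝ → ℝ)
    (hW : ∀ u ∈ Ici t₀, HasDerivAt W (W' u) u)
    (hW'cont : ContinuousOn W' (Ici t₀))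
    (hWnn : ∀ u ∈ Ici t₀, 0 ≤ W u)
    (hle : ∀ u ∈ Ici t₀, W' u ≤ μ u * W u)
    (hμ : ∀ a b, IntervalIntegrable μ volume a b)
    (t : ℝ) (ht : t₀ ≤ t) :
    W t ≤ W t₀ * Real.exp (∫ s in t₀..t, μ s) := by
  have hWcont : ContinuousOn W (Ici t₀) := fun u hu => (hW u hu).continuousAt.continuousWithinAt
  have hsub : Icc t₀ t ⊆ Ici t₀ := Icc_subset_Ici_self
  rcases eq_or_lt_of_le (hWnn t (mem_Ici.2 ht)) with h0 | hWt
  · rw [← h0]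
    exact mul_nonneg (hWnn t₀ self_mem_Ici) (Real.exp_pos _).le
  by_cases hz : ∃ u ∈ Icc t₀ t, W u = 0
  · -- derive a contradiction
    exfalso
    set Z : Set ℝ := {u ∈ Icc t₀ t | W u = 0} with hZdef
    have hZne : Z.Nonempty := by obtain ⟨u, hu, h⟩ := hz; exact ⟨u, hu, h⟩
    have hZclosed : IsClosed Z :=
      (hWcont.mono hsub).preimage_isClosed_of_isClosed isClosed_Icc isClosed_singleton
    have hZbdd : BddAbove Z := ⟨t, fun u hu => hu.1.2⟩
    set s := sSup Z with hs
    have hsZ : s ∈ Z := hZclosed.csSup_mem hZne hZbdd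
    have hsmem : s ∈ Icc t₀ t := hsZ.1
    have hWs : W s = 0 := hsZ.2
    have hst : s < t := lt_of_le_of_ne hsmem.2 (fun h => by rw [h] at hWs; exact hWt.ne' hWs)
    have hpos : ∀ u ∈ Ioc s t, 0 < W u := by
      intro u hu
      rcases eq_or_lt_of_le (hWnn u (le_trans hsmem.1 hu.1.le)) with h0 | h; swap
      · exact h
      · exfalso
        have : u ∈ Z := ⟨⟨le_trans hsmem.1 hu.1.le, hu.2⟩, h0.symm⟩
        exact absurd (le_csSup hZbdd this) (not_le.2 hu.1)
    -- bound for the tail integrals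
    have hFcont : Continuous (fun u => (∫ v in t₀..t, μ v) - ∫ v in t₀..u, μ v) :=
      continuous_const.sub (intervalIntegral.continuous_primitive hμ t₀)
    obtain ⟨C, hC⟩ : ∃ C, ∀ u ∈ Icc s t, (∫ v in u..t, μ v) ≤ C := by
      obtain ⟨C, hC⟩ := (isCompact_Icc.image_of_continuousOn
        (hFcont.continuousOn (s := Icc s t))).bddAbove
      refine ⟨C, fun u hu => ?_⟩
      have heq : (∫ v in u..t, μ v) = (∫ v in t₀..t, μ v) - ∫ v in t₀..u, μ v := by
        rw [← intervalIntegral.integral_add_adjacent_intervals (hμ t₀ u) (hμ u t)]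
        ring
      rw [heq]
      exact hC (mem_image_of_mem _ hu)
    -- choose s' close to s with small W
    have hconts : ContinuousWithinAt W (Ioc s t) s :=
      (hWcont s (hsmem.1)).mono (fun u hu => le_trans hsmem.1 hu.1.le)
    set ε := Real.exp (Real.log (W t) - C - 1) with hε
    have hεpos : 0 < ε := Real.exp_pos _
    have hmem : {u | W u < ε} ∈ 𝓝[Ioc s t] s := by
      have := hconts (Iio_mem_nhds (show W s < ε by rw [hWs]; exact hεpos))
      exact this
    have hne : (𝓝[Ioc s t] s).NeBot := by
      rw [mem_closure_iff_nhdsWithin_neBot.symm, closure_Ioc hst.ne]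
      exact ⟨le_rfl, hst.le⟩
    haveI := hne
    obtain ⟨s', hs'W, hs'mem⟩ := Filter.nonempty_of_mem (Filter.inter_mem hmem self_mem_nhdsWithin)
    -- apply log step on [s', t]
    have hs't : s' ≤ t := hs'mem.2
    have hIccsub : Icc s' t ⊆ Ioc s t := fun u hu => ⟨lt_of_lt_of_le hs'mem.1 hu.1, hu.2⟩
    have hIcisub : Icc s' t ⊆ Ici t₀ := fun u hu => le_trans hsmem.1 (le_trans hs'mem.1.le hu.1)
    have hlog := gron_log_step W W' μ s' t hs't
      (fun u hu => hW u (hIcisub hu)) (hW'cont.mono hIcisub)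
      (fun u hu => hpos u (hIccsub hu)) (fun u hu => hle u (hIcisub hu)) (hμ s' t)
    have h1 : (∫ v in s'..t, μ v) ≤ C := hC s' ⟨hs'mem.1.le, hs't⟩
    have h2 : Real.log (W s') < Real.log (W t) - C - 1 := by
      calc Real.log (W s') < Real.log ε :=
            Real.log_lt_log (hpos s' hs'mem) hs'W
        _ = Real.log (W t) - C - 1 := by rw [hε, Real.log_exp]
    linarith
  · push_neg at hz
    have hpos : ∀ u ∈ Icc t₀ t, 0 < W u := fun u hu =>
      lt_of_le_of_ne (hWnn u (hsub hu)) (fun h => hz u hu h.symm)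
    have hlog := gron_log_step W W' μ t₀ t ht (fun u hu => hW u (hsub hu))
      (hW'cont.mono hsub) hpos (fun u hu => hle u (hsub hu)) (hμ t₀ t)
    have hWt0 : 0 < W t₀ := hpos t₀ (left_mem_Icc.2 ht)
    calc W t = Real.exp (Real.log (W t)) := (Real.exp_log hWt).symm
      _ ≤ Real.exp (Real.log (W t₀) + ∫ s in t₀..t, μ s) := by
          apply Real.exp_le_exp.2; linarith
      _ = W t₀ * Real.exp (∫ s in t₀..t, μ s) := by
          rw [Real.exp_add, Real.exp_log hWt0]


/-- Theorem 1, Item 2: with time-independent class-`K∞` bounds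
`α₁(|x|) ≤ V(t,x) ≤ α₂(|x|)` and `V̇ ≤ μ(t) V`, if `μ` is uniformly exponentially
stable with constants `α > 0`, `β ≥ 0`, then every solution satisfies
`|x(t)| ≤ α₁⁻¹(α₂(|x(t₀)|) e^β e^{-α(t-t₀)})`; in particular the system is globally
uniformly asymptotically stable. -/
theorem stmt5 (tsharp : ℝ) (n : ℕ)
    (f : ℝ → EuclideanSpace ℝ (Fin n) → EuclideanSpace ℝ (Fin n))
    (hf_cont : Continuous fun p : ℝ × EuclideanSpace ℝ (Fin n) => f p.1 p.2)
    (hf_lip : ∀ t, LocallyLipschitz (f t))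
    (hf0 : ∀ t ∈ Set.Ici tsharp, f t (0 : EuclideanSpace ℝ (Fin n)) = 0)
    (V : ℝ → EuclideanSpace ℝ (Fin n) → ℝ)
    (hV_C1 : ContDiff ℝ 1 fun p : ℝ × EuclideanSpace ℝ (Fin n) => V p.1 p.2)
    (hV_nonneg : ∀ t ∈ Set.Ici tsharp, ∀ x : EuclideanSpace ℝ (Fin n), 0 ≤ V t x)
    (α₁ α₂ : ℝ → ℝ)
    (hα₁K : ContinuousOn α₁ (Set.Ici 0) ∧ StrictMonoOn α₁ (Set.Ici 0) ∧ α₁ 0 = 0 ∧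
        Filter.Tendsto α₁ Filter.atTop Filter.atTop)
    (hα₂K : ContinuousOn α₂ (Set.Ici 0) ∧ StrictMonoOn α₂ (Set.Ici 0) ∧ α₂ 0 = 0 ∧
        Filter.Tendsto α₂ Filter.atTop Filter.atTop)
    -- `α₁inv` is the inverse of `α₁` on `[0,∞)`
    (α₁inv : ℝ → ℝ)
    (hα₁inv : Set.InvOn α₁inv α₁ (Set.Ici 0) (Set.Ici 0))
    (μ : ℝ → ℝ)
    (hμ_int : ∀ a b : ℝ, IntervalIntegrable μ MeasureTheory.volume a b)
    (α β : ℝ) (hα : 0 < α) (hβ : 0 ≤ β)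
    (hμ_ues : ∀ t₀ ∈ Set.Ici tsharp, ∀ t ≥ t₀,
        (∫ s in t₀..t, μ s) ≤ -α * (t - t₀) + β)
    (hsandwich : ∀ t ∈ Set.Ici tsharp, ∀ x : EuclideanSpace ℝ (Fin n),
        α₁ ‖x‖ ≤ V t x ∧ V t x ≤ α₂ ‖x‖)
    (hderiv : ∀ t ∈ Set.Ici tsharp, ∀ x : EuclideanSpace ℝ (Fin n),
        (fderiv ℝ (fun p : ℝ × EuclideanSpace ℝ (Fin n) => V p.1 p.2) (t, x)) (1, f t x)
          ≤ μ t * V t x) :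
    ∀ t₀ ∈ Set.Ici tsharp, ∀ x : ℝ → EuclideanSpace ℝ (Fin n),
      (∀ t ≥ t₀, HasDerivAt x (f t (x t)) t) →
      ∀ t ≥ t₀, ‖x t‖ ≤ α₁inv (α₂ ‖x t₀‖ * Real.exp β * Real.exp (-α * (t - t₀))) := by
  
  intro t₀ ht₀ x hx t ht
  have htsub : ∀ u, t₀ ≤ u → u ∈ Set.Ici tsharp := fun u hu => le_trans ht₀ hu
  set Vp : ℝ × EuclideanSpace ℝ (Fin n) → ℝ := fun p => V p.1 p.2 with hVp
  set W : ℝ → ℝ := fun u => V u (x u) with hWdef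
  set W' : ℝ → ℝ := fun u => (fderiv ℝ Vp (u, x u)) (1, f u (x u)) with hW'def
  have hW : ∀ u ∈ Ici t₀, HasDerivAt W (W' u) u := by
    intro u hu
    have h1 : HasFDerivAt Vp (fderiv ℝ Vp (u, x u)) (u, x u) :=
      ((hV_C1.differentiable one_ne_zero) (u, x u)).hasFDerivAt
    have h2 : HasDerivAt (fun v => (v, x v)) ((1 : ℝ), f u (x u)) u :=
      (hasDerivAt_id u).prodMk (hx u hu)
    exact h1.comp_hasDerivAt u h2
  have hxcont : ContinuousOn x (Ici t₀) :=
    fun u hu => (hx u hu).continuousAt.continuousWithinAt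
  have hW'cont : ContinuousOn W' (Ici t₀) := by
    have hpair : ContinuousOn (fun u => ((u, x u) : ℝ × EuclideanSpace ℝ (Fin n))) (Ici t₀) :=
      continuousOn_id.prodMk hxcont
    have hfd : ContinuousOn (fun u => fderiv ℝ Vp (u, x u)) (Ici t₀) :=
      (hV_C1.continuous_fderiv one_ne_zero).comp_continuousOn hpair
    have hvec : ContinuousOn
        (fun u => ((1 : ℝ), f u (x u)) : ℝ → ℝ × EuclideanSpace ℝ (Fin n)) (Ici t₀) :=
      continuousOn_const.prodMk (hf_cont.comp_continuousOn hpair)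
    exact hfd.clm_apply hvec
  have hWnn : ∀ u ∈ Ici t₀, 0 ≤ W u := fun u hu => hV_nonneg u (htsub u hu) (x u)
  have hle : ∀ u ∈ Ici t₀, W' u ≤ μ u * W u := fun u hu => hderiv u (htsub u hu) (x u)
  have hkey := gron_key t₀ W W' μ hW hW'cont hWnn hle hμ_int t ht
  -- combine with UES bound
  have hα₂nn : 0 ≤ α₂ ‖x t₀‖ := by
    rcases eq_or_lt_of_le (norm_nonneg (x t₀)) with h0 | h0
    · rw [← h0, hα₂K.2.2.1]
    · rw [← hα₂K.2.2.1]
      exact (hα₂K.2.1 self_mem_Ici (norm_nonneg _) h0).le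
  set c := α₂ ‖x t₀‖ * Real.exp β * Real.exp (-α * (t - t₀)) with hc
  have hcnn : 0 ≤ c := by positivity
  have hWc : W t ≤ c := by
    have h1 : W t₀ ≤ α₂ ‖x t₀‖ := (hsandwich t₀ ht₀ (x t₀)).2
    have h2 : Real.exp (∫ s in t₀..t, μ s) ≤ Real.exp (-α * (t - t₀) + β) :=
      Real.exp_le_exp.2 (hμ_ues t₀ ht₀ t ht)
    calc W t ≤ W t₀ * Real.exp (∫ s in t₀..t, μ s) := hkey
      _ ≤ α₂ ‖x t₀‖ * Real.exp (-α * (t - t₀) + β) :=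
          mul_le_mul h1 h2 (Real.exp_pos _).le hα₂nn
      _ = c := by rw [hc, Real.exp_add]; ring
  have hα₁x : α₁ ‖x t‖ ≤ c := le_trans (hsandwich t (htsub t ht) (x t)).1 hWc
  -- surjectivity of α₁ onto [0, ∞): find y ≥ 0 with α₁ y = c
  obtain ⟨M, hM0, hMc⟩ : ∃ M, 0 ≤ M ∧ c ≤ α₁ M := by
    obtain ⟨M, hM⟩ := (hα₁K.2.2.2.eventually (eventually_ge_atTop c)).exists_forall_of_atTop
    exact ⟨max M 0, le_max_right _ _, hM _ (le_max_left _ _)⟩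
  obtain ⟨y, hy, hyc⟩ : ∃ y ∈ Icc (0:ℝ) M, α₁ y = c := by
    have := intermediate_value_Icc hM0 (hα₁K.1.mono Icc_subset_Ici_self)
    exact this ⟨by rw [hα₁K.2.2.1]; exact hcnn, hMc⟩
  have hyinv : α₁inv c = y := by rw [← hyc]; exact hα₁inv.1 hy.1
  rw [hc] at hyinv
  rw [hyinv]
  by_contra hcon
  push_neg at hcon
  have := hα₁K.2.1 hy.1 (norm_nonneg (x t)) hcon
  rw [hyc] at this
  exact absurd hα₁x (not_le.2 this)
end

section
/- (Theorem 1, Item 3) Suppose there exist a continuously differentiable V : J × ℝⁿ → [0,∞), a constant m > 0, two positive nondecreasing functions k₁, k₂ : J → (0,∞), and a piecewise continuous μ : J → ℝ such that k₁(t)|x|^m ≤ V(t,x) ≤ k₂(t)|x|^m and ∂V/∂t(t,x) + ∇ₓV(t,x)·f(t,x) ≤ μ(t)V(t,x) for all (t,x) ∈ J × ℝⁿ. If μ is exponentially stable, i.e. there exist α > 0 and β(t₀) ≥ 0 with ∫_{t₀}^{t} μ(s) ds ≤ −α(t−t₀) + β(t₀) for all t ≥ t₀ ∈ J, then every solution of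 ẋ = f(t,x) satisfies |x(t)| ≤ (k₂(t₀)/k₁(t₀))^{1/m}·exp(β(t₀)/m)·|x(t₀)|·exp(−(α/m)(t−t₀)) for all t ≥ t₀ ∈ J; in particular the system is globally exponentially stable. -/
open Filter MeasureTheory Set

/-- Theorem 1, Item 3: with bounds `k₁(t)|x|^m ≤ V(t,x) ≤ k₂(t)|x|^m`
(`k₁, k₂` positive and nondecreasing on `J`, `m > 0`) and `V̇ ≤ μ(t) V`, if `μ` is
exponentially stable with rate `α > 0` and offset `β(t₀) ≥ 0`, then every solution
satisfies `|x(t)| ≤ (k₂(t₀)/k₁(t₀))^{1/m} e^{β(t₀)/m} |x(t₀)| e^{-(α/m)(t-t₀)}`;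
in particular the system is globally exponentially stable. -/
theorem stmt6 (tsharp : ℝ) (n : ℕ)
    (f : ℝ → EuclideanSpace ℝ (Fin n) → EuclideanSpace ℝ (Fin n))
    (hf_cont : Continuous fun p : ℝ × EuclideanSpace ℝ (Fin n) => f p.1 p.2)
    (hf_lip : ∀ t, LocallyLipschitz (f t))
    (hf0 : ∀ t ∈ Set.Ici tsharp, f t (0 : EuclideanSpace ℝ (Fin n)) = 0)
    (V : ℝ → EuclideanSpace ℝ (Fin n) → ℝ)
    (hV_C1 : ContDiff ℝ 1 fun p : ℝ × EuclideanSpace ℝ (Fin n) => V p.1 p.2)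
    (hV_nonneg : ∀ t ∈ Set.Ici tsharp, ∀ x : EuclideanSpace ℝ (Fin n), 0 ≤ V t x)
    (m : ℝ) (hm : 0 < m)
    (k₁ k₂ : ℝ → ℝ)
    (hk₁_pos : ∀ t ∈ Set.Ici tsharp, 0 < k₁ t) (hk₁_mono : MonotoneOn k₁ (Set.Ici tsharp))
    (hk₂_pos : ∀ t ∈ Set.Ici tsharp, 0 < k₂ t) (hk₂_mono : MonotoneOn k₂ (Set.Ici tsharp))
    (μ : ℝ → ℝ)
    (hμ_int : ∀ a b : ℝ, IntervalIntegrable μ MeasureTheory.volume a b)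
    (hsandwich : ∀ t ∈ Set.Ici tsharp, ∀ x : EuclideanSpace ℝ (Fin n),
        k₁ t * ‖x‖ ^ m ≤ V t x ∧ V t x ≤ k₂ t * ‖x‖ ^ m)
    (hderiv : ∀ t ∈ Set.Ici tsharp, ∀ x : EuclideanSpace ℝ (Fin n),
        (fderiv ℝ (fun p : ℝ × EuclideanSpace ℝ (Fin n) => V p.1 p.2) (t, x)) (1, f t x)
          ≤ μ t * V t x)
    (α : ℝ) (hα : 0 < α) (β : ℝ → ℝ) (hβ : ∀ t₀ ∈ Set.Ici tsharp, 0 ≤ β t₀)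
    (hμ_es : ∀ t₀ ∈ Set.Ici tsharp, ∀ t ≥ t₀,
        (∫ s in t₀..t, μ s) ≤ -α * (t - t₀) + β t₀) :
    ∀ t₀ ∈ Set.Ici tsharp, ∀ x : ℝ → EuclideanSpace ℝ (Fin n),
      (∀ t ≥ t₀, HasDerivAt x (f t (x t)) t) →
      ∀ t ≥ t₀, ‖x t‖ ≤ (k₂ t₀ / k₁ t₀) ^ (1 / m) * Real.exp (β t₀ / m) * ‖x t₀‖ *
        Real.exp (-(α / m) * (t - t₀)) := by
  intro t₀ ht₀ x hx t ht
  set Vp : ℝ × EuclideanSpace ℝ (Fin n) → ℝ := fun p => V p.1 p.2 with hVp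
  set g : ℝ → ℝ := fun s => V s (x s) with hgdef
  set d : ℝ → ℝ := fun s => (fderiv ℝ Vp (s, x s)) (1, f s (x s)) with hddef
  have hsh : ∀ s, t₀ ≤ s → tsharp ≤ s := fun s hs => le_trans ht₀ hs
  -- derivative of g
  have hgderiv : ∀ s, t₀ ≤ s → HasDerivAt g (d s) s := by
    intro s hs
    have hcurve : HasDerivAt (fun u : ℝ => (u, x u)) ((1 : ℝ), f s (x s)) s :=
      (hasDerivAt_id s).prodMk (hx s hs)
    exact ((hV_C1.differentiable one_ne_zero (s, x s)).hasFDerivAt).comp_hasDerivAt s hcurve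
  -- continuity of x on Ici t₀
  have hxc : ContinuousOn x (Ici t₀) := fun s hs => ((hx s hs).continuousAt).continuousWithinAt
  have hgc : ContinuousOn g (Ici t₀) := by
    have : ContinuousOn (fun s : ℝ => ((s : ℝ), x s)) (Ici t₀) :=
      (continuousOn_id).prodMk hxc
    exact (hV_C1.continuous.comp_continuousOn this)
  -- continuity of d on Ici t₀
  have hdc : ContinuousOn d (Ici t₀) := by
    have h1 : Continuous (fderiv ℝ Vp) := hV_C1.continuous_fderiv one_ne_zero
    have h2 : ContinuousOn (fun s : ℝ => (fderiv ℝ Vp (s, x s),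
        ((1 : ℝ), f s (x s)))) (Ici t₀) := by
      refine ContinuousOn.prodMk ?_ ?_
      · exact h1.comp_continuousOn ((continuousOn_id).prodMk hxc)
      · exact (continuousOn_const).prodMk
          (hf_cont.comp_continuousOn ((continuousOn_id).prodMk hxc))
    exact isBoundedBilinearMap_apply.continuous.comp_continuousOn h2
  have hgnn : ∀ s, t₀ ≤ s → 0 ≤ g s := fun s hs => hV_nonneg s (hsh s hs) (x s)
  -- log-Gronwall on subintervals where g > 0
  have L : ∀ s r : ℝ, t₀ ≤ s → s ≤ r → (∀ u ∈ Icc s r, 0 < g u) →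
      Real.log (g r) ≤ Real.log (g s) + ∫ u in s..r, μ u := by
    intro s r hs hsr hpos
    have huicc : uIcc s r = Icc s r := uIcc_of_le hsr
    have hF : ∀ u ∈ uIcc s r, HasDerivAt (fun v => Real.log (g v)) ((g u)⁻¹ * d u) u := by
      intro u hu
      rw [huicc] at hu
      exact (Real.hasDerivAt_log (ne_of_gt (hpos u hu))).comp u
        (hgderiv u (le_trans hs hu.1))
    have hIcc_sub : Icc s r ⊆ Ici t₀ := fun u hu => le_trans hs hu.1
    have hInt : IntervalIntegrable (fun u => (g u)⁻¹ * d u) volume s r := by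
      apply ContinuousOn.intervalIntegrable
      rw [huicc]
      exact ((hgc.mono hIcc_sub).inv₀ (fun u hu => ne_of_gt (hpos u hu))).mul
        (hdc.mono hIcc_sub)
    have hFTC := intervalIntegral.integral_eq_sub_of_hasDerivAt hF hInt
    have hmono : (∫ u in s..r, (g u)⁻¹ * d u) ≤ ∫ u in s..r, μ u := by
      apply intervalIntegral.integral_mono_on hsr hInt (hμ_int s r)
      intro u hu
      have hgu := hpos u hu
      have hd : d u ≤ μ u * g u := hderiv u (hsh u (le_trans hs hu.1)) (x u)
      have h1 : (g u)⁻¹ * d u ≤ (g u)⁻¹ * (μ u * g u) :=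
        mul_le_mul_of_nonneg_left hd (inv_nonneg.mpr hgu.le)
      have h2 : (g u)⁻¹ * (μ u * g u) = μ u := by field_simp
      linarith
    linarith [hFTC ▸ hmono]
  -- Claim A: g t ≤ g t₀ * exp(∫ μ)
  have hA : g t ≤ g t₀ * Real.exp (∫ u in t₀..t, μ u) := by
    rcases eq_or_lt_of_le (hgnn t ht) with h0 | hpos
    · exact h0 ▸ mul_nonneg (hgnn t₀ le_rfl) (Real.exp_pos _).le
    -- show g > 0 on all of Icc t₀ t
    have hposall : ∀ u ∈ Icc t₀ t, 0 < g u := by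
      by_contra hcon
      push_neg at hcon
      obtain ⟨u₀, hu₀, hu₀le⟩ := hcon
      have hu₀0 : g u₀ = 0 := le_antisymm hu₀le (hgnn u₀ hu₀.1)
      -- continuous extension of g
      have hmaxc : Continuous (fun s : ℝ => max s t₀) := by fun_prop
      have hGcont : Continuous (fun s : ℝ => g (max s t₀)) := by
        apply hgc.comp_continuous hmaxc
        intro s; exact le_max_right s t₀
      set S : Set ℝ := Icc t₀ t ∩ {s | g (max s t₀) = 0} with hS
      have hSclosed : IsClosed S :=
        isClosed_Icc.inter (isClosed_eq hGcont continuous_const)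
      have hu₀S : u₀ ∈ S := ⟨hu₀, by simpa [max_eq_left hu₀.1] using hu₀0⟩
      have hSne : S.Nonempty := ⟨u₀, hu₀S⟩
      have hSbdd : BddAbove S := ⟨t, fun s hs => hs.1.2⟩
      set a : ℝ := sSup S with ha
      have haS : a ∈ S := hSclosed.csSup_mem hSne hSbdd
      have haIcc : a ∈ Icc t₀ t := haS.1
      have hga : g a = 0 := by
        have h := haS.2
        simp only [Set.mem_setOf_eq] at h
        rwa [max_eq_left haIcc.1] at h
      have hat : a < t := by
        rcases lt_or_eq_of_le haIcc.2 with h | h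
        · exact h
        · exfalso; rw [h] at hga; linarith
      -- g > 0 on Ioc a t
      have hposIoc : ∀ s ∈ Ioc a t, 0 < g s := by
        intro s hs
        rcases eq_or_lt_of_le (hgnn s (le_trans haIcc.1 hs.1.le)) with h0 | h
        · exfalso
          have hsS : s ∈ S := ⟨⟨le_trans haIcc.1 hs.1.le, hs.2⟩,
            by simpa [max_eq_left (le_trans haIcc.1 hs.1.le)] using h0.symm⟩
          exact absurd (le_csSup hSbdd hsS) (not_le.mpr hs.1)
        · exact h
      -- For s ∈ Ioc a t : g s ≥ g t * exp (-(∫_s^t μ))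
      have hlow : ∀ s ∈ Ioc a t, g t * Real.exp (-(∫ u in s..t, μ u)) ≤ g s := by
        intro s hs
        have hst0 : t₀ ≤ s := le_trans haIcc.1 hs.1.le
        have hL := L s t hst0 hs.2 (fun u hu => hposIoc u ⟨lt_of_lt_of_le hs.1 hu.1, hu.2⟩)
        have hgt := hposIoc t ⟨hat, le_rfl⟩
        have hgs := hposIoc s hs
        have : Real.log (g t) - (∫ u in s..t, μ u) ≤ Real.log (g s) := by linarith
        calc g t * Real.exp (-(∫ u in s..t, μ u))
            = Real.exp (Real.log (g t) - (∫ u in s..t, μ u)) := by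
              rw [Real.exp_sub, Real.exp_log hgt, Real.exp_neg]; ring
          _ ≤ Real.exp (Real.log (g s)) := Real.exp_le_exp.mpr this
          _ = g s := Real.exp_log hgs
      -- take limit s → a⁺
      have hIcont : Continuous (fun s : ℝ => ∫ u in t..s, μ u) :=
        intervalIntegral.continuous_primitive hμ_int t
      have hIcont' : Continuous (fun s : ℝ => g t * Real.exp (-(∫ u in s..t, μ u))) := by
        have he : (fun s : ℝ => (∫ u in s..t, μ u)) = fun s => -(∫ u in t..s, μ u) := by
          funext s; rw [intervalIntegral.integral_symm]
        have hI2 : Continuous (fun s : ℝ => (∫ u in s..t, μ u)) := by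
          rw [he]; exact hIcont.neg
        exact continuous_const.mul (Real.continuous_exp.comp hI2.neg)
      have hmem : ∀ᶠ s in nhdsWithin a (Ioi a), s ∈ Ioc a t :=
        Ioc_mem_nhdsGT_of_mem ⟨le_refl a, hat⟩
      have hxa : ContinuousAt x a := (hx a haIcc.1).continuousAt
      have hgaC : ContinuousAt g a :=
        hV_C1.continuous.continuousAt.comp (continuousAt_id.prodMk hxa)
      have htd1 : Tendsto g (nhdsWithin a (Ioi a)) (nhds (g a)) :=
        hgaC.tendsto.mono_left nhdsWithin_le_nhds
      have htd2 : Tendsto (fun s : ℝ => g t * Real.exp (-(∫ u in s..t, μ u)))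
          (nhdsWithin a (Ioi a))
          (nhds (g t * Real.exp (-(∫ u in a..t, μ u)))) :=
        hIcont'.continuousAt.tendsto.mono_left nhdsWithin_le_nhds
      have hfin : g t * Real.exp (-(∫ u in a..t, μ u)) ≤ g a :=
        le_of_tendsto_of_tendsto htd2 htd1 (hmem.mono fun s hs => hlow s hs)
      rw [hga] at hfin
      nlinarith [Real.exp_pos (-(∫ u in a..t, μ u)), hpos]
    have h1 := L t₀ t le_rfl ht hposall
    have hgt0 : 0 < g t₀ := hposall t₀ ⟨le_rfl, ht⟩
    have hgtt : 0 < g t := hposall t ⟨ht, le_rfl⟩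
    calc g t = Real.exp (Real.log (g t)) := (Real.exp_log hgtt).symm
      _ ≤ Real.exp (Real.log (g t₀) + ∫ u in t₀..t, μ u) := Real.exp_le_exp.mpr h1
      _ = g t₀ * Real.exp (∫ u in t₀..t, μ u) := by
          rw [Real.exp_add, Real.exp_log hgt0]
  -- assemble the final estimate
  have hk1t₀ := hk₁_pos t₀ ht₀
  have hk2t₀ := hk₂_pos t₀ ht₀
  have hs1 := (hsandwich t (hsh t ht) (x t)).1
  have hs2 := (hsandwich t₀ ht₀ (x t₀)).2
  have hμb := hμ_es t₀ ht₀ t ht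
  have hk1mono : k₁ t₀ ≤ k₁ t := hk₁_mono ht₀ (hsh t ht) ht
  have hxtm : (0:ℝ) ≤ ‖x t‖ ^ m := Real.rpow_nonneg (norm_nonneg _) m
  have hxt0m : (0:ℝ) ≤ ‖x t₀‖ ^ m := Real.rpow_nonneg (norm_nonneg _) m
  have h5 : k₁ t₀ * ‖x t‖ ^ m ≤
      k₂ t₀ * ‖x t₀‖ ^ m * Real.exp (-α * (t - t₀) + β t₀) := by
    have e1 : k₁ t₀ * ‖x t‖ ^ m ≤ k₁ t * ‖x t‖ ^ m :=
      mul_le_mul_of_nonneg_right hk1mono hxtm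
    have e2 : g t₀ * Real.exp (∫ u in t₀..t, μ u) ≤
        k₂ t₀ * ‖x t₀‖ ^ m * Real.exp (-α * (t - t₀) + β t₀) :=
      mul_le_mul hs2 (Real.exp_le_exp.mpr hμb) (Real.exp_pos _).le
        (mul_nonneg hk2t₀.le hxt0m)
    calc k₁ t₀ * ‖x t‖ ^ m ≤ k₁ t * ‖x t‖ ^ m := e1
      _ ≤ g t := hs1
      _ ≤ g t₀ * Real.exp (∫ u in t₀..t, μ u) := hA
      _ ≤ _ := e2
  have hmain : ‖x t‖ ^ m ≤
      (k₂ t₀ / k₁ t₀) * ‖x t₀‖ ^ m * Real.exp (-α * (t - t₀) + β t₀) := by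
    rw [div_mul_eq_mul_div, div_mul_eq_mul_div, le_div_iff₀ hk1t₀]
    linarith
  have hRnn : (0:ℝ) ≤ (k₂ t₀ / k₁ t₀) * ‖x t₀‖ ^ m * Real.exp (-α * (t - t₀) + β t₀) := by
    positivity
  have hinvm : (0:ℝ) ≤ 1 / m := by positivity
  have hroot : ∀ A : ℝ, 0 ≤ A → (A ^ m) ^ (1/m) = A := by
    intro A hA
    rw [← Real.rpow_mul hA, mul_one_div_cancel hm.ne', Real.rpow_one]
  have h7 : ‖x t‖ ≤ ((k₂ t₀ / k₁ t₀) * ‖x t₀‖ ^ m *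
      Real.exp (-α * (t - t₀) + β t₀)) ^ (1/m) := by
    rw [← hroot ‖x t‖ (norm_nonneg _)]
    exact Real.rpow_le_rpow hxtm hmain hinvm
  have h8 : ((k₂ t₀ / k₁ t₀) * ‖x t₀‖ ^ m *
      Real.exp (-α * (t - t₀) + β t₀)) ^ (1/m)
      = (k₂ t₀ / k₁ t₀) ^ (1/m) * ‖x t₀‖ *
        Real.exp ((-α * (t - t₀) + β t₀) * (1/m)) := by
    rw [Real.mul_rpow (mul_nonneg (div_nonneg hk2t₀.le hk1t₀.le) hxt0m)
        (Real.exp_pos _).le,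
      Real.mul_rpow (div_nonneg hk2t₀.le hk1t₀.le) hxt0m,
      hroot ‖x t₀‖ (norm_nonneg _), ← Real.exp_mul]
  have h9 : Real.exp ((-α * (t - t₀) + β t₀) * (1/m))
      = Real.exp (β t₀ / m) * Real.exp (-(α / m) * (t - t₀)) := by
    rw [← Real.exp_add]
    congr 1
    field_simp
    ring
  calc ‖x t‖ ≤ _ := h7
    _ = (k₂ t₀ / k₁ t₀) ^ (1/m) * ‖x t₀‖ *
        (Real.exp (β t₀ / m) * Real.exp (-(α / m) * (t - t₀))) := by rw [h8, h9]
    _ = (k₂ t₀ / k₁ t₀) ^ (1/m) * Real.exp (β t₀ / m) * ‖x t₀‖ *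
        Real.exp (-(α / m) * (t - t₀)) := by ring
end

section
/- (Theorem 2) Suppose there exist a continuously differentiable V : J × ℝⁿ → [0,∞), two class-NK∞ functions α₁, α₂, an asymptotically stable piecewise continuous μ : J → ℝ (i.e., lim_{t→∞} ∫_{t₀}^{t} μ(s) ds = −∞ for every t₀ ∈ J), and a piecewise continuous π : J → [0,∞) such that α₁(t,|x|) ≤ V(t,x) ≤ α₂(t,|x|) and ∂V/∂t(t,x) + ∇ₓV(t,x)·f(t,x) ≤ μ(t)V(t,x) + π(t) for all (t,x) ∈ J × ℝⁿ. Let φ(t,s) = exp(∫_{s}^{t} μ(ω) dω) and κ(t,t₀) = ∫_{t₀}^{t} φ(t,s)π(s) ds. If for every t₀ ∈ J the function t ↦ κ(t,t₀) is bounded on [t₀,∞) and lim_{t→∞} κ(t,t₀) = 0, then every solution x of ẋ = f(t,x) satisfies α₁(t₀,|x(t)|) ≤ V(t₀,x(t₀))φ(t,t₀) + κ(t,t₀) for all t ≥ t₀, is bounded on [t₀,∞), and converges to 0 as t → ∞; in particular the system is globally attractive and Lagrange stable. -/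
open Filter MeasureTheory Set

open intervalIntegral

lemma expgron_A (a b : ℝ) (hab : a ≤ b) (g : ℝ → ℝ) (hg : Continuous g)
    (v v' : ℝ → ℝ) (hv : ∀ s ∈ Icc a b, HasDerivAt v (v' s) s)
    (hv' : ContinuousOn v' (Icc a b)) :
    v b * Real.exp (-∫ u in a..b, g u) - v a
      = ∫ s in a..b, Real.exp (-∫ u in a..s, g u) * (v' s - g s * v s) := by
  have hvc : ContinuousOn v (Icc a b) := fun s hs =>
    (hv s hs).continuousAt.continuousWithinAt
  set F : ℝ → ℝ := fun s => ∫ u in a..s, g u with hF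
  have hFc : Continuous F := intervalIntegral.continuous_primitive
    (fun c d => hg.intervalIntegrable c d) a
  have hFd : ∀ s : ℝ, HasDerivAt F (g s) s := fun s =>
    intervalIntegral.integral_hasDerivAt_right (hg.intervalIntegrable a s)
      (hg.stronglyMeasurableAtFilter _ _) hg.continuousAt
  have hh : ∀ s ∈ Set.uIcc a b, HasDerivAt (fun s => v s * Real.exp (-F s))
      (Real.exp (-F s) * (v' s - g s * v s)) s := by
    intro s hs
    rw [Set.uIcc_of_le hab] at hs
    have h1 : HasDerivAt (fun s => Real.exp (-F s)) (Real.exp (-F s) * (-g s)) s :=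
      ((hFd s).neg).exp
    have : HasDerivAt (fun s => v s * Real.exp (-F s)) _ s := (hv s hs).mul h1
    convert this using 1
    ring
  have hint : IntervalIntegrable (fun s => Real.exp (-F s) * (v' s - g s * v s))
      volume a b := by
    apply ContinuousOn.intervalIntegrable
    rw [Set.uIcc_of_le hab]
    exact ((hFc.neg.rexp).continuousOn).mul (hv'.sub ((hg.continuousOn).mul hvc))
  have := intervalIntegral.integral_eq_sub_of_hasDerivAt hh hint
  rw [this, hF]
  simp [intervalIntegral.integral_same]

lemma exp_sub_exp_abs_le {x y M : ℝ} (hx : x ≤ M) (hy : y ≤ M) :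
    |Real.exp x - Real.exp y| ≤ Real.exp M * |x - y| := by
  wlog h : y ≤ x generalizing x y
  · rw [abs_sub_comm, abs_sub_comm x y]; exact this hy hx (le_of_not_ge h)
  rw [abs_of_nonneg (sub_nonneg.2 (Real.exp_le_exp.2 h)), abs_of_nonneg (sub_nonneg.2 h)]
  have key : Real.exp x - Real.exp y ≤ (x - y) * Real.exp x := by
    have h2 : 1 - (x - y) ≤ Real.exp (-(x - y)) := by
      have := Real.add_one_le_exp (-(x - y)); linarith
    have h3 : (1 - (x - y)) * Real.exp x ≤ Real.exp (-(x - y)) * Real.exp x :=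
      mul_le_mul_of_nonneg_right h2 (Real.exp_pos x).le
    rw [← Real.exp_add] at h3
    have : -(x - y) + x = y := by ring
    rw [this] at h3
    nlinarith
  calc Real.exp x - Real.exp y ≤ (x - y) * Real.exp x := key
    _ ≤ Real.exp M * (x - y) := by
        rw [mul_comm]
        exact mul_le_mul_of_nonneg_right (Real.exp_le_exp.2 hx) (by linarith)

lemma expgron_B' (a b : ℝ) (hab : a ≤ b) (f : ℝ → ℝ)
    (hf : Integrable f (volume : Measure ℝ))
    (v v' : ℝ → ℝ) (hv : ∀ s ∈ Icc a b, HasDerivAt v (v' s) s)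
    (hv' : ContinuousOn v' (Icc a b)) :
    v b * Real.exp (-∫ u in a..b, f u) - v a
      = ∫ s in a..b, Real.exp (-∫ u in a..s, f u) * (v' s - f s * v s) := by
  have hvc : ContinuousOn v (Icc a b) := fun s hs =>
    (hv s hs).continuousAt.continuousWithinAt
  obtain ⟨Cv0, hCv0⟩ := isCompact_Icc.exists_bound_of_continuousOn hvc
  obtain ⟨Cv0', hCv0'⟩ := isCompact_Icc.exists_bound_of_continuousOn hv'
  set Cv := max Cv0 0 with hCvdef
  set Cv' := max Cv0' 0 with hCv'def
  have hCv : ∀ s ∈ Icc a b, |v s| ≤ Cv := fun s hs => (hCv0 s hs).trans (le_max_left _ _)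
  have hCv' : ∀ s ∈ Icc a b, |v' s| ≤ Cv' := fun s hs => (hCv0' s hs).trans (le_max_left _ _)
  have hCvnn : 0 ≤ Cv := le_max_right _ _
  have hCv'nn : 0 ≤ Cv' := le_max_right _ _
  set C₁ : ℝ := ∫ x, |f x| with hC₁def
  have hC₁nn : 0 ≤ C₁ := integral_nonneg fun x => abs_nonneg _
  -- generic bound on interval integrals of an integrable function
  have genbd : ∀ (h : ℝ → ℝ), Integrable h (volume : Measure ℝ) →
      ∀ c d : ℝ, |∫ u in c..d, h u| ≤ ∫ x, |h x| := by
    intro h hh c d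
    have h1 : |∫ u in c..d, h u| ≤ ∫ x in Set.uIoc c d, |h x| := by
      simpa [Real.norm_eq_abs] using
        (intervalIntegral.norm_integral_le_integral_norm_uIoc (f := h) (a := c) (b := d)
          (μ := volume))
    refine h1.trans (setIntegral_le_integral hh.abs ?_)
    exact Filter.Eventually.of_forall fun x => abs_nonneg _
  have hFfB : ∀ c d : ℝ, |∫ u in c..d, f u| ≤ C₁ := genbd f hf
  set E : ℝ := Real.exp (C₁ + 1) with hEdef
  have hEnn : 0 < E := Real.exp_pos _
  set K : ℝ := E * (Cv + Cv' * (b - a) + Cv * C₁ + Cv) with hKdef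
  have hKnn : 0 ≤ K := by
    apply mul_nonneg hEnn.le
    have : 0 ≤ b - a := by linarith
    positivity
  set D : ℝ := v b * Real.exp (-∫ u in a..b, f u) - v a
      - ∫ s in a..b, Real.exp (-∫ u in a..s, f u) * (v' s - f s * v s) with hDdef
  suffices hD : |D| = 0 by
    have := abs_eq_zero.mp hD
    rw [hDdef] at this; linarith
  -- integrability of the `f`-integrand
  have hFfc : Continuous (fun s => ∫ u in a..s, f u) :=
    intervalIntegral.continuous_primitive (fun c d => hf.intervalIntegrable) a
  have hExpfC : Continuous (fun s => Real.exp (-∫ u in a..s, f u)) := hFfc.neg.rexp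
  have hip : IntervalIntegrable (fun s => Real.exp (-∫ u in a..s, f u) * (v' s - f s * v s))
      volume a b := by
    have i1 : IntervalIntegrable (fun s => Real.exp (-∫ u in a..s, f u) * v' s) volume a b := by
      apply ContinuousOn.intervalIntegrable
      rw [Set.uIcc_of_le hab]
      exact hExpfC.continuousOn.mul hv'
    have i2 : IntervalIntegrable
        (fun s => (Real.exp (-∫ u in a..s, f u) * v s) * f s) volume a b := by
      apply IntervalIntegrable.continuousOn_mul (hf.intervalIntegrable)
      rw [Set.uIcc_of_le hab]
      exact hExpfC.continuousOn.mul hvc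
    have := i1.sub i2
    convert this using 1
    funext s; ring
  have key : ∀ ε : ℝ, 0 < ε → ε ≤ 1 → |D| ≤ K * ε := by
    intro ε hε hε1
    obtain ⟨g, _, hgL1, hgcont, hgint⟩ := hf.exists_hasCompactSupport_integral_sub_le hε
    -- bound on the difference of primitives
    have hdiff : ∀ c d : ℝ, |(∫ u in c..d, f u) - ∫ u in c..d, g u| ≤ ε := by
      intro c d
      have := genbd (fun x => f x - g x) (hf.sub hgint) c d
      rw [intervalIntegral.integral_sub hf.intervalIntegrable hgint.intervalIntegrable] at this
      calc |(∫ u in c..d, f u) - ∫ u in c..d, g u| ≤ ∫ x, |f x - g x| := this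
        _ ≤ ε := by
            refine le_trans (le_of_eq ?_) hgL1
            simp [Real.norm_eq_abs]
    have hexpd : ∀ c d : ℝ, |Real.exp (-∫ u in c..d, f u) - Real.exp (-∫ u in c..d, g u)|
        ≤ E * ε := by
      intro c d
      have h1 : -∫ u in c..d, f u ≤ C₁ + 1 := by
        have := hFfB c d; rw [abs_le] at this; linarith
      have h2 : -∫ u in c..d, g u ≤ C₁ + 1 := by
        have hd := hdiff c d
        have := hFfB c d
        rw [abs_le] at hd this
        linarith
      have := exp_sub_exp_abs_le h1 h2
      rw [hEdef]
      refine this.trans ?_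
      apply mul_le_mul_of_nonneg_left _ (Real.exp_pos _).le
      have := hdiff c d
      calc |(-∫ u in c..d, f u) - -∫ u in c..d, g u|
          = |(∫ u in c..d, f u) - ∫ u in c..d, g u| := by rw [← abs_neg]; ring_nf
        _ ≤ ε := hdiff c d
    have hexpgB : ∀ c d : ℝ, Real.exp (-∫ u in c..d, g u) ≤ E := by
      intro c d
      rw [hEdef, Real.exp_le_exp]
      have hd := hdiff c d
      have := hFfB c d
      rw [abs_le] at hd this
      linarith
    -- identity for the continuous approximation
    have hIg := expgron_A a b hab g hgcont v v' hv hv'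
    -- integrability of q-integrand
    have hFgc : Continuous (fun s => ∫ u in a..s, g u) :=
      intervalIntegral.continuous_primitive (fun c d => hgcont.intervalIntegrable c d) a
    have hiq : IntervalIntegrable (fun s => Real.exp (-∫ u in a..s, g u) * (v' s - g s * v s))
        volume a b := by
      apply ContinuousOn.intervalIntegrable
      rw [Set.uIcc_of_le hab]
      exact (hFgc.neg.rexp.continuousOn).mul (hv'.sub (hgcont.continuousOn.mul hvc))
    -- pointwise bound on difference of integrands
    set maj : ℝ → ℝ := fun s => E * ε * Cv' + E * ε * Cv * |f s| + E * Cv * |f s - g s|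
      with hmajdef
    have habsint : Integrable (fun x => |f x|) (volume : Measure ℝ) := hf.abs
    have hfgint : Integrable (fun x => |f x - g x|) (volume : Measure ℝ) := (hf.sub hgint).abs
    have m1 : IntervalIntegrable (fun s => E * ε * Cv * |f s|) volume a b :=
      habsint.intervalIntegrable.const_mul _
    have m2 : IntervalIntegrable (fun s => E * Cv * |f s - g s|) volume a b :=
      hfgint.intervalIntegrable.const_mul _
    have hmajint : IntervalIntegrable maj volume a b :=
      (intervalIntegrable_const.add m1).add m2
    have hptwise : ∀ s ∈ Icc a b,
        |Real.exp (-∫ u in a..s, g u) * (v' s - g s * v s)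
          - Real.exp (-∫ u in a..s, f u) * (v' s - f s * v s)| ≤ maj s := by
      intro s hs
      set Eg := Real.exp (-∫ u in a..s, g u)
      set Ef := Real.exp (-∫ u in a..s, f u)
      have hsplit : Eg * (v' s - g s * v s) - Ef * (v' s - f s * v s)
          = Eg * ((f s - g s) * v s) + (Eg - Ef) * (v' s - f s * v s) := by ring
      rw [hsplit]
      have t1 : |Eg * ((f s - g s) * v s)| ≤ E * Cv * |f s - g s| := by
        rw [abs_mul, abs_mul]
        have hEgnn : |Eg| ≤ E := by
          rw [abs_of_pos (Real.exp_pos _)]; exact hexpgB a s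
        calc |Eg| * (|f s - g s| * |v s|)
            ≤ E * (|f s - g s| * Cv) := by
              apply mul_le_mul hEgnn _ (by positivity) (by positivity)
              exact mul_le_mul_of_nonneg_left (hCv s hs) (abs_nonneg _)
          _ = E * Cv * |f s - g s| := by ring
      have t2 : |(Eg - Ef) * (v' s - f s * v s)| ≤ E * ε * (Cv' + |f s| * Cv) := by
        rw [abs_mul]
        have h1 : |Eg - Ef| ≤ E * ε := by
          rw [abs_sub_comm]; exact hexpd a s
        have h2 : |v' s - f s * v s| ≤ Cv' + |f s| * Cv := by
          calc |v' s - f s * v s| ≤ |v' s| + |f s * v s| := abs_sub _ _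
            _ ≤ Cv' + |f s| * Cv := by
                rw [abs_mul]
                exact add_le_add (hCv' s hs)
                  (mul_le_mul_of_nonneg_left (hCv s hs) (abs_nonneg _))
        calc |Eg - Ef| * |v' s - f s * v s| ≤ (E * ε) * (Cv' + |f s| * Cv) := by
              apply mul_le_mul h1 h2 (abs_nonneg _) (by positivity)
          _ = E * ε * (Cv' + |f s| * Cv) := by ring
      calc |Eg * ((f s - g s) * v s) + (Eg - Ef) * (v' s - f s * v s)|
          ≤ |Eg * ((f s - g s) * v s)| + |(Eg - Ef) * (v' s - f s * v s)| := abs_add_le _ _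
        _ ≤ E * Cv * |f s - g s| + E * ε * (Cv' + |f s| * Cv) := add_le_add t1 t2
        _ = maj s := by rw [hmajdef]; ring
    -- integral of the majorant
    have hfabs_le : (∫ s in a..b, |f s|) ≤ C₁ := by
      rw [intervalIntegral.integral_of_le hab]
      exact setIntegral_le_integral hf.abs (Filter.Eventually.of_forall fun x => abs_nonneg _)

    have hfgabs_le : (∫ s in a..b, |f s - g s|) ≤ ε := by
      rw [intervalIntegral.integral_of_le hab]
      refine le_trans (setIntegral_le_integral ((hf.sub hgint).abs)
        (Filter.Eventually.of_forall fun x => abs_nonneg _) :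
          (∫ s in Set.Ioc a b, |f s - g s|) ≤ ∫ s : ℝ, |f s - g s|) ?_
      refine le_trans (le_of_eq ?_) hgL1
      simp [Real.norm_eq_abs]
    have hmajval : (∫ s in a..b, maj s) ≤ E * ε * Cv' * (b - a) + E * ε * Cv * C₁ + E * Cv * ε := by
      rw [hmajdef]
      rw [intervalIntegral.integral_add (intervalIntegrable_const.add m1) m2,
        intervalIntegral.integral_add intervalIntegrable_const m1,
        intervalIntegral.integral_const_mul]
      simp only [intervalIntegral.integral_const_mul, intervalIntegral.integral_const,
        smul_eq_mul]
      have e1 : E * ε * Cv * (∫ s in a..b, |f s|) ≤ E * ε * Cv * C₁ :=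
        mul_le_mul_of_nonneg_left hfabs_le (by positivity)
      have e2 : E * Cv * (∫ s in a..b, |f s - g s|) ≤ E * Cv * ε :=
        mul_le_mul_of_nonneg_left hfgabs_le (by positivity)
      nlinarith [e1, e2]
    -- assemble
    have hIdiff : |(∫ s in a..b, Real.exp (-∫ u in a..s, g u) * (v' s - g s * v s))
        - ∫ s in a..b, Real.exp (-∫ u in a..s, f u) * (v' s - f s * v s)|
        ≤ E * ε * Cv' * (b - a) + E * ε * Cv * C₁ + E * Cv * ε := by
      rw [← intervalIntegral.integral_sub hiq hip]
      refine le_trans (intervalIntegral.abs_integral_le_integral_abs hab) ?_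
      refine le_trans ?_ hmajval
      apply intervalIntegral.integral_mono_on hab ((hiq.sub hip).abs) hmajint
      intro s hs
      exact hptwise s hs
    have hLdiff : |v b * Real.exp (-∫ u in a..b, f u) - v b * Real.exp (-∫ u in a..b, g u)|
        ≤ Cv * (E * ε) := by
      rw [← mul_sub, abs_mul]
      have hb : b ∈ Icc a b := right_mem_Icc.mpr hab
      exact mul_le_mul (hCv b hb) (hexpd a b) (abs_nonneg _) hCvnn
    rw [hDdef]
    have hrw : v b * Real.exp (-∫ u in a..b, f u) - v a
        - ∫ s in a..b, Real.exp (-∫ u in a..s, f u) * (v' s - f s * v s)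
        = (v b * Real.exp (-∫ u in a..b, f u) - v b * Real.exp (-∫ u in a..b, g u))
          + ((∫ s in a..b, Real.exp (-∫ u in a..s, g u) * (v' s - g s * v s))
            - ∫ s in a..b, Real.exp (-∫ u in a..s, f u) * (v' s - f s * v s)) := by
      have := hIg
      linarith [hIg]
    rw [hrw]
    calc |_ + _| ≤ _ := abs_add_le _ _
      _ ≤ Cv * (E * ε) + (E * ε * Cv' * (b - a) + E * ε * Cv * C₁ + E * Cv * ε) :=
          add_le_add hLdiff hIdiff
      _ = K * ε := by rw [hKdef]; ring
  -- conclude |D| = 0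
  have hle : ∀ δ : ℝ, 0 < δ → |D| ≤ δ := by
    intro δ hδ
    have hεpos : 0 < min 1 (δ / (K + 1)) := lt_min one_pos (by positivity)
    have := key _ hεpos (min_le_left _ _)
    refine this.trans ?_
    have h1 : K * min 1 (δ / (K + 1)) ≤ K * (δ / (K + 1)) :=
      mul_le_mul_of_nonneg_left (min_le_right _ _) hKnn
    refine h1.trans ?_
    rw [mul_comm, div_mul_eq_mul_div, div_le_iff₀ (by positivity : (0:ℝ) < K + 1)]
    nlinarith
  have : |D| ≤ 0 := le_of_forall_pos_le_add fun δ hδ => by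
    simpa using hle δ hδ
  exact le_antisymm this (abs_nonneg _)

lemma expgron_B (a b : ℝ) (hab : a ≤ b) (μ : ℝ → ℝ)
    (hμ : IntervalIntegrable μ volume a b)
    (v v' : ℝ → ℝ) (hv : ∀ s ∈ Icc a b, HasDerivAt v (v' s) s)
    (hv' : ContinuousOn v' (Icc a b)) :
    v b * Real.exp (-∫ u in a..b, μ u) - v a
      = ∫ s in a..b, Real.exp (-∫ u in a..s, μ u) * (v' s - μ s * v s) := by
  set f : ℝ → ℝ := (Icc a b).indicator μ with hfdef
  have hfint : Integrable f (volume : Measure ℝ) :=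
    IntegrableOn.integrable_indicator
      ((intervalIntegrable_iff_integrableOn_Icc_of_le hab).mp hμ) measurableSet_Icc
  have hcong : ∀ s ∈ Icc a b, (∫ u in a..s, f u) = ∫ u in a..s, μ u := by
    intro s hs
    apply intervalIntegral.integral_congr
    intro u hu
    rw [Set.uIcc_of_le hs.1] at hu
    have : u ∈ Icc a b := ⟨hu.1, hu.2.trans hs.2⟩
    exact Set.indicator_of_mem this μ
  have hmain := expgron_B' a b hab f hfint v v' hv hv'
  rw [hcong b (right_mem_Icc.mpr hab)] at hmain
  rw [hmain]
  apply intervalIntegral.integral_congr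
  intro s hs
  rw [Set.uIcc_of_le hab] at hs
  show Real.exp (-∫ u in a..s, f u) * (v' s - f s * v s)
      = Real.exp (-∫ u in a..s, μ u) * (v' s - μ s * v s)
  rw [hcong s hs, hfdef, Set.indicator_of_mem hs μ]

lemma expgron_C (a b : ℝ) (hab : a ≤ b) (μ π' : ℝ → ℝ)
    (hμ : ∀ c d : ℝ, IntervalIntegrable μ volume c d)
    (hπ : IntervalIntegrable π' volume a b)
    (v v' : ℝ → ℝ) (hv : ∀ s ∈ Icc a b, HasDerivAt v (v' s) s)
    (hv' : ContinuousOn v' (Icc a b))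
    (hineq : ∀ s ∈ Icc a b, v' s ≤ μ s * v s + π' s) :
    v b ≤ v a * Real.exp (∫ u in a..b, μ u)
      + ∫ s in a..b, Real.exp (∫ u in s..b, μ u) * π' s := by
  have hvc : ContinuousOn v (Icc a b) := fun s hs =>
    (hv s hs).continuousAt.continuousWithinAt
  have hFc : Continuous (fun s => ∫ u in a..s, μ u) :=
    intervalIntegral.continuous_primitive (fun c d => hμ c d) a
  have hExpC : Continuous (fun s => Real.exp (-∫ u in a..s, μ u)) := hFc.neg.rexp
  have hmain := expgron_B a b hab μ (hμ a b) v v' hv hv'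
  -- integrability of both integrands
  have hip : IntervalIntegrable (fun s => Real.exp (-∫ u in a..s, μ u) * (v' s - μ s * v s))
      volume a b := by
    have i1 : IntervalIntegrable (fun s => Real.exp (-∫ u in a..s, μ u) * v' s) volume a b := by
      apply ContinuousOn.intervalIntegrable
      rw [Set.uIcc_of_le hab]
      exact hExpC.continuousOn.mul hv'
    have i2 : IntervalIntegrable
        (fun s => (Real.exp (-∫ u in a..s, μ u) * v s) * μ s) volume a b := by
      apply IntervalIntegrable.continuousOn_mul (hμ a b)
      rw [Set.uIcc_of_le hab]
      exact hExpC.continuousOn.mul hvc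
    have := i1.sub i2
    convert this using 1
    funext s; ring
  have hiq : IntervalIntegrable (fun s => Real.exp (-∫ u in a..s, μ u) * π' s) volume a b := by
    apply IntervalIntegrable.continuousOn_mul hπ
    rw [Set.uIcc_of_le hab]
    exact hExpC.continuousOn
  have hmono : (∫ s in a..b, Real.exp (-∫ u in a..s, μ u) * (v' s - μ s * v s))
      ≤ ∫ s in a..b, Real.exp (-∫ u in a..s, μ u) * π' s := by
    apply intervalIntegral.integral_mono_on hab hip hiq
    intro s hs
    apply mul_le_mul_of_nonneg_left _ (Real.exp_pos _).le
    have := hineq s hs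
    linarith
  have hstep : v b * Real.exp (-∫ u in a..b, μ u)
      ≤ v a + ∫ s in a..b, Real.exp (-∫ u in a..s, μ u) * π' s := by linarith
  have hmulpos : (0:ℝ) < Real.exp (∫ u in a..b, μ u) := Real.exp_pos _
  have hstep2 := mul_le_mul_of_nonneg_right hstep hmulpos.le
  have hlhs : v b * Real.exp (-∫ u in a..b, μ u) * Real.exp (∫ u in a..b, μ u) = v b := by
    rw [mul_assoc, ← Real.exp_add]
    simp
  rw [hlhs] at hstep2
  refine hstep2.trans (le_of_eq ?_)
  rw [add_mul]
  congr 1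
  rw [← intervalIntegral.integral_mul_const]
  apply intervalIntegral.integral_congr
  intro s hs
  rw [Set.uIcc_of_le hab] at hs
  have hsub : (∫ u in a..b, μ u) - ∫ u in a..s, μ u = ∫ u in s..b, μ u :=
    intervalIntegral.integral_interval_sub_left (hμ a b) (hμ a s)
  show Real.exp (-∫ u in a..s, μ u) * π' s * Real.exp (∫ u in a..b, μ u)
      = Real.exp (∫ u in s..b, μ u) * π' s
  rw [mul_right_comm, ← Real.exp_add]
  congr 2
  rw [← hsub]; ring

/-- Theorem 2: with `NK∞` bounds `α₁(t,|x|) ≤ V(t,x) ≤ α₂(t,|x|)`,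
an asymptotically stable `μ`, and a nonnegative piecewise continuous drift `π` with
`V̇ ≤ μ(t) V + π(t)`, if `κ(t,t₀) = ∫ s in t₀..t, φ(t,s) π(s) ds` is bounded in `t`
and tends to `0` as `t → ∞` for every `t₀ ∈ J` (where `φ(t,s) = exp ∫ s..t μ`), then
every solution `x` satisfies `α₁(t₀,|x(t)|) ≤ V(t₀,x(t₀)) φ(t,t₀) + κ(t,t₀)` for
`t ≥ t₀`, is bounded on `[t₀,∞)`, and converges to `0`. -/
theorem stmt9 (tsharp : ℝ) (n : ℕ)
    (f : ℝ → EuclideanSpace ℝ (Fin n) → EuclideanSpace ℝ (Fin n))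
    (hf_cont : Continuous fun p : ℝ × EuclideanSpace ℝ (Fin n) => f p.1 p.2)
    (hf_lip : ∀ t, LocallyLipschitz (f t))
    (hf0 : ∀ t ∈ Set.Ici tsharp, f t (0 : EuclideanSpace ℝ (Fin n)) = 0)
    (V : ℝ → EuclideanSpace ℝ (Fin n) → ℝ)
    (hV_C1 : ContDiff ℝ 1 fun p : ℝ × EuclideanSpace ℝ (Fin n) => V p.1 p.2)
    (hV_nonneg : ∀ t ∈ Set.Ici tsharp, ∀ x : EuclideanSpace ℝ (Fin n), 0 ≤ V t x)
    (α₁ α₂ : ℝ → ℝ → ℝ)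
    (hα₁K : ∀ t ∈ Set.Ici tsharp, ContinuousOn (α₁ t) (Set.Ici 0) ∧
        StrictMonoOn (α₁ t) (Set.Ici 0) ∧ α₁ t 0 = 0 ∧
        Filter.Tendsto (α₁ t) Filter.atTop Filter.atTop)
    (hα₂K : ∀ t ∈ Set.Ici tsharp, ContinuousOn (α₂ t) (Set.Ici 0) ∧
        StrictMonoOn (α₂ t) (Set.Ici 0) ∧ α₂ t 0 = 0 ∧
        Filter.Tendsto (α₂ t) Filter.atTop Filter.atTop)
    (hα₁N : ∀ s ≥ (0:ℝ), MonotoneOn (fun t => α₁ t s) (Set.Ici tsharp))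
    (hα₂N : ∀ s ≥ (0:ℝ), MonotoneOn (fun t => α₂ t s) (Set.Ici tsharp))
    (μ : ℝ → ℝ)
    (hμ_int : ∀ a b : ℝ, IntervalIntegrable μ MeasureTheory.volume a b)
    (hμ_as : ∀ t₀ ∈ Set.Ici tsharp,
        Filter.Tendsto (fun t => ∫ s in t₀..t, μ s) Filter.atTop Filter.atBot)
    (π' : ℝ → ℝ)
    (hπ_nonneg : ∀ t ∈ Set.Ici tsharp, 0 ≤ π' t)
    (hπ_int : ∀ a b : ℝ, IntervalIntegrable π' MeasureTheory.volume a b)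
    (hsandwich : ∀ t ∈ Set.Ici tsharp, ∀ x : EuclideanSpace ℝ (Fin n),
        α₁ t ‖x‖ ≤ V t x ∧ V t x ≤ α₂ t ‖x‖)
    (hderiv : ∀ t ∈ Set.Ici tsharp, ∀ x : EuclideanSpace ℝ (Fin n),
        (fderiv ℝ (fun p : ℝ × EuclideanSpace ℝ (Fin n) => V p.1 p.2) (t, x)) (1, f t x)
          ≤ μ t * V t x + π' t)
    -- `κ(·,t₀)` is bounded and tends to `0` for every `t₀ ∈ J`
    (hκ_bdd : ∀ t₀ ∈ Set.Ici tsharp, ∃ M : ℝ, ∀ t ≥ t₀,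
        |∫ s in t₀..t, Real.exp (∫ ω in s..t, μ ω) * π' s| ≤ M)
    (hκ_lim : ∀ t₀ ∈ Set.Ici tsharp,
        Filter.Tendsto (fun t => ∫ s in t₀..t, Real.exp (∫ ω in s..t, μ ω) * π' s)
          Filter.atTop (nhds 0)) :
    ∀ t₀ ∈ Set.Ici tsharp, ∀ x : ℝ → EuclideanSpace ℝ (Fin n),
      (∀ t ≥ t₀, HasDerivAt x (f t (x t)) t) →
      (∀ t ≥ t₀, α₁ t₀ ‖x t‖ ≤ V t₀ (x t₀) * Real.exp (∫ s in t₀..t, μ s) +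
          ∫ s in t₀..t, Real.exp (∫ ω in s..t, μ ω) * π' s) ∧
      (∃ M : ℝ, ∀ t ≥ t₀, ‖x t‖ ≤ M) ∧
      Filter.Tendsto x Filter.atTop (nhds 0) := by
  intro t₀ ht₀ x hx
  set Vp : ℝ × EuclideanSpace ℝ (Fin n) → ℝ := fun p => V p.1 p.2 with hVpdef
  set v : ℝ → ℝ := fun s => V s (x s) with hvdef
  set v' : ℝ → ℝ := fun s => (fderiv ℝ Vp (s, x s)) (1, f s (x s)) with hv'def
  have hxc : ContinuousOn x (Set.Ici t₀) := fun s hs =>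
    ((hx s hs).continuousAt).continuousWithinAt
  have hVdiff : Differentiable ℝ Vp := hV_C1.differentiable one_ne_zero
  have hv : ∀ s, t₀ ≤ s → HasDerivAt v (v' s) s := by
    intro s hs
    have h1 : HasDerivAt (fun u => (u, x u)) ((1:ℝ), f s (x s)) s :=
      (hasDerivAt_id s).prodMk (hx s hs)
    exact (hVdiff (s, x s)).hasFDerivAt.comp_hasDerivAt s h1
  have hv'c : ContinuousOn v' (Set.Ici t₀) := by
    have hcf : Continuous (fderiv ℝ Vp) := hV_C1.continuous_fderiv one_ne_zero
    have hpair : ContinuousOn (fun s => (s, x s)) (Set.Ici t₀) :=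
      continuousOn_id.prodMk hxc
    have h1 : ContinuousOn (fun s => fderiv ℝ Vp (s, x s)) (Set.Ici t₀) :=
      hcf.comp_continuousOn hpair
    have h2 : ContinuousOn (fun s => ((1:ℝ), f s (x s))) (Set.Ici t₀) :=
      continuousOn_const.prodMk (hf_cont.comp_continuousOn hpair)
    exact h1.clm_apply h2
  have gron : ∀ t, t₀ ≤ t → v t ≤ v t₀ * Real.exp (∫ s in t₀..t, μ s)
      + ∫ s in t₀..t, Real.exp (∫ ω in s..t, μ ω) * π' s := by
    intro t ht
    apply expgron_C t₀ t ht μ π' hμ_int (hπ_int t₀ t) v v'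
      (fun s hs => hv s hs.1) (hv'c.mono (Set.Icc_subset_Ici_self))
    intro s hs
    exact hderiv s (le_trans ht₀ hs.1) (x s)
  have part1 : ∀ t ≥ t₀, α₁ t₀ ‖x t‖ ≤ V t₀ (x t₀) * Real.exp (∫ s in t₀..t, μ s) +
      ∫ s in t₀..t, Real.exp (∫ ω in s..t, μ ω) * π' s := by
    intro t ht
    have hn : (0:ℝ) ≤ ‖x t‖ := norm_nonneg _
    have hmono : α₁ t₀ ‖x t‖ ≤ α₁ t ‖x t‖ :=
      hα₁N ‖x t‖ hn ht₀ (le_trans ht₀ ht) ht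
    have hsand : α₁ t ‖x t‖ ≤ v t := (hsandwich t (le_trans ht₀ ht) (x t)).1
    exact le_trans (le_trans hmono hsand) (gron t ht)
  refine ⟨part1, ?_, ?_⟩
  · -- boundedness
    have hφc : Continuous (fun t => Real.exp (∫ s in t₀..t, μ s)) :=
      (intervalIntegral.continuous_primitive hμ_int t₀).rexp
    have hφ0 : Filter.Tendsto (fun t => Real.exp (∫ s in t₀..t, μ s))
        Filter.atTop (nhds 0) := Real.tendsto_exp_atBot.comp (hμ_as t₀ ht₀)
    have hv0nn : 0 ≤ v t₀ := hV_nonneg t₀ ht₀ (x t₀)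
    obtain ⟨hα₁c, hα₁sm, hα₁0, hα₁top⟩ := hα₁K t₀ ht₀
    obtain ⟨T, hT⟩ := Filter.eventually_atTop.mp (hφ0.eventually_lt_const one_pos)
    obtain ⟨C0, hC0⟩ := isCompact_Icc.exists_bound_of_continuousOn
      (hφc.continuousOn : ContinuousOn _ (Set.Icc t₀ (max T t₀)))
    have hCφ : ∀ t ≥ t₀, Real.exp (∫ s in t₀..t, μ s) ≤ max C0 1 := by
      intro t ht
      rcases le_total t (max T t₀) with h | h
      · have := hC0 t ⟨ht, h⟩
        rw [Real.norm_eq_abs] at this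
        exact le_trans (le_trans (le_abs_self _) this) (le_max_left _ _)
      · exact le_trans (hT t (le_trans (le_max_left _ _) h)).le (le_max_right _ _)
    obtain ⟨M, hM⟩ := hκ_bdd t₀ ht₀
    set B : ℝ := v t₀ * max C0 1 + M with hBdef
    have hB : ∀ t ≥ t₀, α₁ t₀ ‖x t‖ ≤ B := by
      intro t ht
      refine le_trans (part1 t ht) ?_
      exact add_le_add (mul_le_mul_of_nonneg_left (hCφ t ht) hv0nn)
        ((le_abs_self _).trans (hM t ht))
    obtain ⟨r₀, hr₀⟩ := Filter.eventually_atTop.mp (hα₁top.eventually_ge_atTop B)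
    refine ⟨max r₀ 0, fun t ht => ?_⟩
    by_contra hcon
    push_neg at hcon
    have h1 : α₁ t₀ (max r₀ 0) < α₁ t₀ ‖x t‖ :=
      hα₁sm (show max r₀ 0 ∈ Set.Ici (0:ℝ) from Set.mem_Ici.mpr (le_max_right _ _)) (norm_nonneg _) hcon
    have h2 : B ≤ α₁ t₀ (max r₀ 0) := hr₀ _ (le_max_left _ _)
    have h3 := hB t ht
    linarith
  · -- convergence to zero
    have hφc : Continuous (fun t => Real.exp (∫ s in t₀..t, μ s)) :=
      (intervalIntegral.continuous_primitive hμ_int t₀).rexp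
    have hφ0 : Filter.Tendsto (fun t => Real.exp (∫ s in t₀..t, μ s))
        Filter.atTop (nhds 0) := Real.tendsto_exp_atBot.comp (hμ_as t₀ ht₀)
    have hv0nn : 0 ≤ v t₀ := hV_nonneg t₀ ht₀ (x t₀)
    obtain ⟨hα₁c, hα₁sm, hα₁0, hα₁top⟩ := hα₁K t₀ ht₀
    have hL : Filter.Tendsto
        (fun t => v t₀ * Real.exp (∫ s in t₀..t, μ s) +
          ∫ s in t₀..t, Real.exp (∫ ω in s..t, μ ω) * π' s)
        Filter.atTop (nhds 0) := by
      have := (hφ0.const_mul (v t₀)).add (hκ_lim t₀ ht₀)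
      simpa using this
    rw [NormedAddCommGroup.tendsto_nhds_zero]
    intro ε hε
    have hδ : 0 < α₁ t₀ ε := by
      have := hα₁sm (le_refl (0:ℝ) : (0:ℝ) ∈ Set.Ici (0:ℝ)) hε.le hε
      rw [hα₁0] at this
      exact this
    filter_upwards [hL.eventually_lt_const hδ, Filter.eventually_ge_atTop t₀]
      with t hLt htt
    by_contra hcon
    push_neg at hcon
    have h1 : α₁ t₀ ε ≤ α₁ t₀ ‖x t‖ :=
      hα₁sm.monotoneOn hε.le (norm_nonneg _) hcon
    have h2 := part1 t htt
    linarith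
end

section
/- (Lemma 3, Item 3) Let φ₁ : [0,∞) → ℝ be bounded with lim_{t→∞} φ₁(t) = 0 and let φ₂ : J → ℝ be in L^1(J), and set φ(t,τ) = ∫_{τ}^{t} φ₁(t−s)φ₂(s) ds for t ≥ τ ∈ J. Then φ(t,τ) is uniformly bounded for t ≥ τ ∈ J and, for each τ ∈ J, lim_{t→∞} φ(t,τ) = 0. -/
open Filter MeasureTheory Set

lemma stmt12_aux (φ₁ φ₂ : ℝ → ℝ) (h1m : Measurable φ₁) (h2m : Measurable φ₂)
    (a b t C : ℝ) (hab : a ≤ b) (h2 : IntegrableOn φ₂ (Set.Ioc a b))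
    (hC : ∀ s ∈ Set.Ioc a b, |φ₁ (t - s)| ≤ C) :
    IntegrableOn (fun s => φ₁ (t - s) * φ₂ s) (Set.Ioc a b) ∧
      |∫ s in a..b, φ₁ (t - s) * φ₂ s| ≤ C * ∫ s in Set.Ioc a b, |φ₂ s| := by
  have hmeas : AEStronglyMeasurable (fun s => φ₁ (t - s) * φ₂ s)
      (volume.restrict (Set.Ioc a b)) := by
    exact ((h1m.comp (measurable_const.sub measurable_id)).mul h2m).aestronglyMeasurable
  have hg : IntegrableOn (fun s => C * |φ₂ s|) (Set.Ioc a b) := (h2.abs).const_mul C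
  have hbd : ∀ᵐ s ∂(volume.restrict (Set.Ioc a b)),
      ‖φ₁ (t - s) * φ₂ s‖ ≤ C * |φ₂ s| := by
    filter_upwards [ae_restrict_mem measurableSet_Ioc] with s hs
    rw [Real.norm_eq_abs, abs_mul]
    exact mul_le_mul_of_nonneg_right (hC s hs) (abs_nonneg _)
  have hint : IntegrableOn (fun s => φ₁ (t - s) * φ₂ s) (Set.Ioc a b) :=
    Integrable.mono' hg hmeas hbd
  refine ⟨hint, ?_⟩
  rw [intervalIntegral.integral_of_le hab]
  calc |∫ s in Set.Ioc a b, φ₁ (t - s) * φ₂ s|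
      ≤ ∫ s in Set.Ioc a b, |φ₁ (t - s) * φ₂ s| := by
        simpa only [Real.norm_eq_abs] using
          norm_integral_le_integral_norm (μ := volume.restrict (Set.Ioc a b))
            (f := fun s => φ₁ (t - s) * φ₂ s)
    _ ≤ ∫ s in Set.Ioc a b, C * |φ₂ s| := by
        refine setIntegral_mono_on hint.abs hg measurableSet_Ioc ?_
        intro s hs
        rw [abs_mul]
        exact mul_le_mul_of_nonneg_right (hC s hs) (abs_nonneg _)
    _ = C * ∫ s in Set.Ioc a b, |φ₂ s| := MeasureTheory.integral_const_mul C _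


/-- Lemma 3, Item 3: if `φ₁ : [0,∞) → ℝ` is bounded with
`φ₁(t) → 0` as `t → ∞` and `φ₂ ∈ L¹(J)`, then `φ(t,τ) = ∫ s in τ..t, φ₁ (t-s) * φ₂ s`
is uniformly bounded for `t ≥ τ ∈ J` and, for each `τ ∈ J`, `φ(t,τ) → 0` as `t → ∞`. -/
theorem stmt12 (tsharp : ℝ) (φ₁ φ₂ : ℝ → ℝ)
    (h1m : Measurable φ₁) (h2m : Measurable φ₂)
    (h1_bdd : ∃ C : ℝ, ∀ t ∈ Set.Ici (0:ℝ), |φ₁ t| ≤ C)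
    (h1_lim : Filter.Tendsto φ₁ Filter.atTop (nhds 0))
    (h2 : IntegrableOn φ₂ (Set.Ici tsharp)) :
    (∃ M : ℝ, ∀ τ ∈ Set.Ici tsharp, ∀ t ≥ τ,
        |∫ s in τ..t, φ₁ (t - s) * φ₂ s| ≤ M) ∧
    (∀ τ ∈ Set.Ici tsharp,
        Filter.Tendsto (fun t => ∫ s in τ..t, φ₁ (t - s) * φ₂ s)
          Filter.atTop (nhds 0)) := by
  obtain ⟨C, hC⟩ := h1_bdd
  set C1 : ℝ := max C 1 with hC1def
  have hC1pos : 0 < C1 := lt_of_lt_of_le one_pos (le_max_right _ _)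
  have hC1 : ∀ u : ℝ, 0 ≤ u → |φ₁ u| ≤ C1 := fun u hu =>
    le_trans (hC u hu) (le_max_left _ _)
  set I0 : ℝ := ∫ s in Set.Ici tsharp, |φ₂ s| with hI0def
  have hI0 : 0 ≤ I0 := setIntegral_nonneg measurableSet_Ici (fun s _ => abs_nonneg _)
  -- monotonicity of the |φ₂| integral over subsets of Ici tsharp
  have hmono : ∀ S : Set ℝ, S ⊆ Set.Ici tsharp → ∫ s in S, |φ₂ s| ≤ I0 := by
    intro S hS
    refine setIntegral_mono_set h2.abs ?_ (HasSubset.Subset.eventuallyLE hS)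
    exact Filter.Eventually.of_forall fun s => abs_nonneg _
  constructor
  · refine ⟨C1 * I0, ?_⟩
    intro τ hτ t ht
    have hsub : Set.Ioc τ t ⊆ Set.Ici tsharp := fun s hs => le_trans hτ (le_of_lt hs.1)
    have h2' : IntegrableOn φ₂ (Set.Ioc τ t) := h2.mono_set hsub
    have hb : ∀ s ∈ Set.Ioc τ t, |φ₁ (t - s)| ≤ C1 := fun s hs =>
      hC1 _ (by linarith [hs.2])
    have := (stmt12_aux φ₁ φ₂ h1m h2m τ t t C1 ht h2' hb).2
    calc |∫ s in τ..t, φ₁ (t - s) * φ₂ s| ≤ C1 * ∫ s in Set.Ioc τ t, |φ₂ s| := this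
      _ ≤ C1 * I0 := mul_le_mul_of_nonneg_left (hmono _ hsub) (le_of_lt hC1pos)
  · intro τ hτ
    rw [Metric.tendsto_atTop]
    intro ε hε
    have hIoi : Set.Ioi τ ⊆ Set.Ici tsharp := fun s hs => Set.mem_Ici.mpr (le_trans hτ (le_of_lt hs))
    set Jτ : ℝ := ∫ s in Set.Ioi τ, |φ₂ s| with hJdef
    have h2τ : IntegrableOn (fun s => |φ₂ s|) (Set.Ioi τ) := MeasureTheory.IntegrableOn.mono_set h2.abs hIoi
    have htail : Tendsto (fun T => ∫ s in τ..T, |φ₂ s|) atTop (nhds Jτ) :=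
      MeasureTheory.intervalIntegral_tendsto_integral_Ioi τ h2τ tendsto_id
    have hδ : 0 < ε / (2 * C1) := by positivity
    obtain ⟨N, hN⟩ := (Metric.tendsto_atTop.mp htail) (ε / (2 * C1)) hδ
    set T : ℝ := max τ N with hTdef
    have hτT : τ ≤ T := le_max_left _ _
    have hTtail : Jτ - ∫ s in τ..T, |φ₂ s| < ε / (2 * C1) := by
      have := hN T (le_max_right _ _)
      rw [Real.dist_eq, abs_sub_lt_iff] at this
      linarith [this.2]
    have hδ2 : 0 < ε / (2 * (I0 + 1)) := by positivity
    obtain ⟨A, hA⟩ := (Metric.tendsto_atTop.mp h1_lim) (ε / (2 * (I0 + 1))) hδ2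
    refine ⟨max T (A + T), ?_⟩
    intro t ht
    have hTt : T ≤ t := le_trans (le_max_left _ _) ht
    have hAt : A + T ≤ t := le_trans (le_max_right _ _) ht
    have hτt : τ ≤ t := le_trans hτT hTt
    -- integrability of pieces
    have h2a : IntegrableOn φ₂ (Set.Ioc τ T) :=
      h2.mono_set (fun s hs => le_trans hτ (le_of_lt hs.1))
    have h2b : IntegrableOn φ₂ (Set.Ioc T t) :=
      h2.mono_set (fun s hs => le_trans hτ (lt_of_le_of_lt hτT hs.1).le)
    have hb1 : ∀ s ∈ Set.Ioc τ T, |φ₁ (t - s)| ≤ ε / (2 * (I0 + 1)) := by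
      intro s hs
      have : A ≤ t - s := by linarith [hs.2]
      have := hA (t - s) this
      rw [Real.dist_eq, sub_zero] at this
      exact le_of_lt this
    have hb2 : ∀ s ∈ Set.Ioc T t, |φ₁ (t - s)| ≤ C1 := fun s hs =>
      hC1 _ (by linarith [hs.2])
    obtain ⟨hi1, he1⟩ := stmt12_aux φ₁ φ₂ h1m h2m τ T t (ε / (2 * (I0 + 1))) hτT h2a hb1
    obtain ⟨hi2, he2⟩ := stmt12_aux φ₁ φ₂ h1m h2m T t t C1 hTt h2b hb2
    have hii1 : IntervalIntegrable (fun s => φ₁ (t - s) * φ₂ s) volume τ T :=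
      (intervalIntegrable_iff_integrableOn_Ioc_of_le hτT).mpr hi1
    have hii2 : IntervalIntegrable (fun s => φ₁ (t - s) * φ₂ s) volume T t :=
      (intervalIntegrable_iff_integrableOn_Ioc_of_le hTt).mpr hi2
    have hsplit : (∫ s in τ..T, φ₁ (t - s) * φ₂ s) + ∫ s in T..t, φ₁ (t - s) * φ₂ s
        = ∫ s in τ..t, φ₁ (t - s) * φ₂ s :=
      intervalIntegral.integral_add_adjacent_intervals hii1 hii2
    -- tail estimate for |φ₂|
    have habs1 : IntervalIntegrable (fun s => |φ₂ s|) volume τ T :=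
      (intervalIntegrable_iff_integrableOn_Ioc_of_le hτT).mpr h2a.abs
    have habs2 : IntervalIntegrable (fun s => |φ₂ s|) volume T t :=
      (intervalIntegrable_iff_integrableOn_Ioc_of_le hTt).mpr h2b.abs
    have hsplitabs : (∫ s in τ..T, |φ₂ s|) + ∫ s in T..t, |φ₂ s|
        = ∫ s in τ..t, |φ₂ s| :=
      intervalIntegral.integral_add_adjacent_intervals habs1 habs2
    have hle : (∫ s in τ..t, |φ₂ s|) ≤ Jτ := by
      rw [intervalIntegral.integral_of_le hτt]
      refine setIntegral_mono_set h2τ ?_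
        (HasSubset.Subset.eventuallyLE Set.Ioc_subset_Ioi_self)
      exact Filter.Eventually.of_forall fun s => abs_nonneg _
    have htail2 : (∫ s in Set.Ioc T t, |φ₂ s|) < ε / (2 * C1) := by
      have : (∫ s in T..t, |φ₂ s|) = ∫ s in Set.Ioc T t, |φ₂ s| :=
        intervalIntegral.integral_of_le hTt
      linarith [hsplitabs, hle, hTtail]
    -- combine
    have h1est : |∫ s in τ..T, φ₁ (t - s) * φ₂ s| ≤ ε / 2 := by
      have hsm : (∫ s in Set.Ioc τ T, |φ₂ s|) ≤ I0 :=
        hmono _ (fun s hs => le_trans hτ (le_of_lt hs.1))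
      calc |∫ s in τ..T, φ₁ (t - s) * φ₂ s|
          ≤ ε / (2 * (I0 + 1)) * ∫ s in Set.Ioc τ T, |φ₂ s| := he1
        _ ≤ ε / (2 * (I0 + 1)) * (I0 + 1) := by
            apply mul_le_mul_of_nonneg_left _ (le_of_lt hδ2)
            linarith
        _ = ε / 2 := by field_simp
    have h2est : |∫ s in T..t, φ₁ (t - s) * φ₂ s| < ε / 2 := by
      calc |∫ s in T..t, φ₁ (t - s) * φ₂ s|
          ≤ C1 * ∫ s in Set.Ioc T t, |φ₂ s| := he2
        _ < C1 * (ε / (2 * C1)) := by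
            exact mul_lt_mul_of_pos_left htail2 hC1pos
        _ = ε / 2 := by field_simp
    rw [Real.dist_eq, sub_zero, ← hsplit]
    calc |(∫ s in τ..T, φ₁ (t - s) * φ₂ s) + ∫ s in T..t, φ₁ (t - s) * φ₂ s|
        ≤ |∫ s in τ..T, φ₁ (t - s) * φ₂ s| + |∫ s in T..t, φ₁ (t - s) * φ₂ s| :=
          abs_add_le _ _
      _ < ε / 2 + ε / 2 := by linarith [h1est, h2est]
      _ = ε := by ring
end

section
/- (Theorem 3, ISS with indefinite derivative) Suppose there exist a continuously differentiable V : J × ℝⁿ → [0,∞), two class-K∞ functions α₁, α₂, a class-K function ρ, and a piecewise continuous μ : J → ℝ that is uniformly exponentially stable with constants α > 0 and β ≥ 0 (i.e., ∫_{t₀}^{t} μ(s) ds ≤ −α(t−t₀) + β for all t ≥ t₀ ∈ J), such that α₁(|x|) ≤ V(t,x) ≤ α₂(|x|) for all (t,x), and along every solution, whenever V(t,x(t)) ≥ ρ(|u(t)|) one has d/dt V(t,x(t)) ≤ μ(t)V(t,x(t)). Then every solution satisfies |x(t)| ≤ α₁⁻¹( 2e^{β} α₂(|x(t₀)|) e^{−α(t−t₀)}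 ) + α₁⁻¹( 2e^{β} ρ( sup_{s∈[t₀,t]} |u(s)| ) ) for all t ≥ t₀ ∈ J; in particular the system ẋ = f(t,x,u) is input-to-state stable. -/
open Filter MeasureTheory Set

/-- Log-Grönwall: if `W` stays positive and `W' ≤ μ W` on `[a,b]`, then
`W b ≤ W a * exp (∫ μ)`. -/
lemma stmt13_gronwall {W Wd μ : ℝ → ℝ} {a b cε : ℝ} (hab : a ≤ b)
    (hW : ∀ s ∈ Set.Icc a b, HasDerivAt W (Wd s) s)
    (hμ_int : ∀ p q : ℝ, IntervalIntegrable μ MeasureTheory.volume p q)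
    (hpos : 0 < cε) (hlow : ∀ s ∈ Set.Icc a b, cε ≤ W s)
    (hineq : ∀ s ∈ Set.Icc a b, Wd s ≤ μ s * W s) :
    W b ≤ W a * Real.exp (∫ s in a..b, μ s) := by
  have hWpos : ∀ s ∈ Set.Icc a b, 0 < W s := fun s hs => hpos.trans_le (hlow s hs)
  have hcont : ContinuousOn (fun s => Real.log (W s)) (Set.Icc a b) := by
    intro s hs
    exact ((Real.continuousAt_log (ne_of_gt (hWpos s hs))).comp
      (hW s hs).continuousAt).continuousWithinAt
  have hderiv : ∀ s ∈ Set.Ioo a b,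
      HasDerivWithinAt (fun s => Real.log (W s)) (Wd s / W s) (Set.Ioi s) s := by
    intro s hs
    exact ((hW s (Set.Ioo_subset_Icc_self hs)).log
      (ne_of_gt (hWpos s (Set.Ioo_subset_Icc_self hs)))).hasDerivWithinAt
  have hint : MeasureTheory.IntegrableOn μ (Set.Icc a b) :=
    (intervalIntegrable_iff_integrableOn_Icc_of_le hab).mp (hμ_int a b)
  have hle : ∀ s ∈ Set.Ioo a b, Wd s / W s ≤ μ s := by
    intro s hs
    rw [div_le_iff₀ (hWpos s (Set.Ioo_subset_Icc_self hs))]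
    exact hineq s (Set.Ioo_subset_Icc_self hs)
  have key := intervalIntegral.sub_le_integral_of_hasDeriv_right_of_le hab hcont hderiv hint hle
  have hWa := hWpos a ⟨le_rfl, hab⟩
  have hWb := hWpos b ⟨hab, le_rfl⟩
  calc W b = Real.exp (Real.log (W b)) := (Real.exp_log hWb).symm
    _ ≤ Real.exp (Real.log (W a) + ∫ s in a..b, μ s) := Real.exp_le_exp.2 (by linarith)
    _ = W a * Real.exp (∫ s in a..b, μ s) := by rw [Real.exp_add, Real.exp_log hWa]

/-- Key bound: `W t ≤ max (e^{β-α(t-t₀)} W t₀) (e^β c)`. -/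
lemma stmt13_key {W Wd μ : ℝ → ℝ} {t₀ t c α β : ℝ} (ht : t₀ ≤ t) (hα : 0 < α) (hβ : 0 ≤ β)
    (hW : ∀ s, t₀ ≤ s → HasDerivAt W (Wd s) s)
    (hWnn : 0 ≤ W t₀)
    (hμ_int : ∀ p q : ℝ, IntervalIntegrable μ MeasureTheory.volume p q)
    (hμ_ues : ∀ a, t₀ ≤ a → ∀ b, a ≤ b → (∫ s in a..b, μ s) ≤ -α * (b - a) + β)
    (hc : 0 ≤ c)
    (hcond : ∀ s ∈ Set.Icc t₀ t, c ≤ W s → Wd s ≤ μ s * W s) :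
    W t ≤ max (Real.exp (β - α * (t - t₀)) * W t₀) (Real.exp β * c) := by
  have hstep : ∀ ε : ℝ, 0 < ε →
      W t ≤ max (Real.exp (β - α * (t - t₀)) * W t₀) (Real.exp β * (c + ε)) := by
    intro ε hε
    set cε := c + ε with hcε_def
    have hcε : 0 < cε := by positivity
    have hWIcc : ∀ s ∈ Set.Icc t₀ t, HasDerivAt W (Wd s) s := fun s hs => hW s hs.1
    have hcond' : ∀ s ∈ Set.Icc t₀ t, cε ≤ W s → Wd s ≤ μ s * W s := by
      intro s hs hle
      exact hcond s hs (by linarith)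
    by_cases hall : ∀ s ∈ Set.Icc t₀ t, cε ≤ W s
    · refine le_trans ?_ (le_max_left _ _)
      have h1 := stmt13_gronwall ht hWIcc hμ_int hcε hall
        (fun s hs => hcond' s hs (hall s hs))
      have h2 : (∫ s in t₀..t, μ s) ≤ β - α * (t - t₀) := by
        have := hμ_ues t₀ le_rfl t ht; linarith
      calc W t ≤ W t₀ * Real.exp (∫ s in t₀..t, μ s) := h1
        _ ≤ W t₀ * Real.exp (β - α * (t - t₀)) :=
            mul_le_mul_of_nonneg_left (Real.exp_le_exp.2 h2) hWnn
        _ = Real.exp (β - α * (t - t₀)) * W t₀ := mul_comm _ _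
    · push_neg at hall
      obtain ⟨s₀, hs₀, hs₀lt⟩ := hall
      by_cases htle : W t ≤ cε
      · refine le_trans ?_ (le_max_right _ _)
        calc W t ≤ cε := htle
          _ ≤ Real.exp β * cε := le_mul_of_one_le_left hcε.le (Real.one_le_exp hβ)
      · push_neg at htle
        set K := Set.Icc t₀ t ∩ W ⁻¹' (Set.Iic cε) with hK_def
        have hKne : K.Nonempty := ⟨s₀, hs₀, le_of_lt hs₀lt⟩
        have hWcontOn : ContinuousOn W (Set.Icc t₀ t) :=
          fun s hs => (hWIcc s hs).continuousAt.continuousWithinAt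
        have hK_closed : IsClosed K :=
          hWcontOn.preimage_isClosed_of_isClosed isClosed_Icc isClosed_Iic
        have hK_cpt : IsCompact K :=
          isCompact_Icc.of_isClosed_subset hK_closed Set.inter_subset_left
        set a := sSup K with ha_def
        have haK : a ∈ K := hK_cpt.sSup_mem hKne
        have haIcc : a ∈ Set.Icc t₀ t := haK.1
        have haW : W a ≤ cε := haK.2
        have hat : a < t := by
          rcases lt_or_eq_of_le haIcc.2 with h | h
          · exact h
          · exact absurd (h ▸ haW) (not_le.2 htle)
        have hIoc : ∀ s ∈ Set.Ioc a t, cε ≤ W s := by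
          intro s hs
          by_contra hlt
          push_neg at hlt
          have hsK : s ∈ K := ⟨⟨le_trans haIcc.1 hs.1.le, hs.2⟩, le_of_lt hlt⟩
          exact absurd (le_csSup hK_cpt.bddAbove hsK) (not_le.2 hs.1)
        have haW' : cε ≤ W a := by
          have htend : Filter.Tendsto W (nhdsWithin a (Set.Ioi a)) (nhds (W a)) :=
            (hW a haIcc.1).continuousAt.continuousWithinAt.tendsto
          refine ge_of_tendsto htend ?_
          filter_upwards [Ioo_mem_nhdsGT_of_mem ⟨le_rfl, hat⟩] with s hs
          exact hIoc s ⟨hs.1, hs.2.le⟩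
        have hlow : ∀ s ∈ Set.Icc a t, cε ≤ W s := by
          intro s hs
          rcases eq_or_lt_of_le hs.1 with h | h
          · exact h ▸ haW'
          · exact hIoc s ⟨h, hs.2⟩
        have hsub : Set.Icc a t ⊆ Set.Icc t₀ t := Set.Icc_subset_Icc haIcc.1 le_rfl
        have h1 := stmt13_gronwall hat.le (fun s hs => hWIcc s (hsub hs)) hμ_int hcε hlow
          (fun s hs => hcond' s (hsub hs) (hlow s hs))
        have h2 : (∫ s in a..t, μ s) ≤ β := by
          have := hμ_ues a haIcc.1 t hat.le
          nlinarith [hα.le, sub_nonneg.2 hat.le]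
        have hWaeq : W a = cε := le_antisymm haW haW'
        refine le_trans ?_ (le_max_right _ _)
        calc W t ≤ W a * Real.exp (∫ s in a..t, μ s) := h1
          _ = cε * Real.exp (∫ s in a..t, μ s) := by rw [hWaeq]
          _ ≤ cε * Real.exp β := mul_le_mul_of_nonneg_left (Real.exp_le_exp.2 h2) hcε.le
          _ = Real.exp β * cε := mul_comm _ _
  refine le_of_forall_pos_le_add fun δ hδ => ?_
  have hε : (0:ℝ) < δ / Real.exp β := div_pos hδ (Real.exp_pos β)
  have h := hstep _ hε
  have heq : Real.exp β * (c + δ / Real.exp β) = Real.exp β * c + δ := by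
    field_simp
  rw [heq] at h
  calc W t ≤ max (Real.exp (β - α * (t - t₀)) * W t₀) (Real.exp β * c + δ) := h
    _ ≤ max (Real.exp (β - α * (t - t₀)) * W t₀ + δ) (Real.exp β * c + δ) :=
        max_le_max (by linarith) le_rfl
    _ = max (Real.exp (β - α * (t - t₀)) * W t₀) (Real.exp β * c) + δ :=
        (max_add_add_right _ _ _)

/-- Theorem 3, ISS with indefinite derivative: with class-`K∞`
bounds `α₁(|x|) ≤ V(t,x) ≤ α₂(|x|)`, a class-`K` function `ρ`, and a uniformly
exponentially stable `μ` (constants `α > 0`, `β ≥ 0`), if along every solution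
`V(t,x(t)) ≥ ρ(|u(t)|)` implies `d/dt V(t,x(t)) ≤ μ(t) V(t,x(t))`, then every
solution satisfies
`|x(t)| ≤ α₁⁻¹(2 e^β α₂(|x(t₀)|) e^{-α(t-t₀)}) + α₁⁻¹(2 e^β ρ(sup_{[t₀,t]} |u|))`;
in particular the system is input-to-state stable. -/
theorem stmt13 (tsharp : ℝ) (n m : ℕ)
    (f : ℝ → EuclideanSpace ℝ (Fin n) → EuclideanSpace ℝ (Fin m) → EuclideanSpace ℝ (Fin n))
    (hf_cont : Continuous fun p : ℝ × EuclideanSpace ℝ (Fin n) × EuclideanSpace ℝ (Fin m) =>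
        f p.1 p.2.1 p.2.2)
    (hf0 : ∀ t ∈ Set.Ici tsharp, f t 0 0 = 0)
    (V : ℝ → EuclideanSpace ℝ (Fin n) → ℝ)
    (hV_C1 : ContDiff ℝ 1 fun p : ℝ × EuclideanSpace ℝ (Fin n) => V p.1 p.2)
    (hV_nonneg : ∀ t ∈ Set.Ici tsharp, ∀ x : EuclideanSpace ℝ (Fin n), 0 ≤ V t x)
    (α₁ α₂ : ℝ → ℝ)
    (hα₁K : ContinuousOn α₁ (Set.Ici 0) ∧ StrictMonoOn α₁ (Set.Ici 0) ∧ α₁ 0 = 0 ∧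
        Filter.Tendsto α₁ Filter.atTop Filter.atTop)
    (hα₂K : ContinuousOn α₂ (Set.Ici 0) ∧ StrictMonoOn α₂ (Set.Ici 0) ∧ α₂ 0 = 0 ∧
        Filter.Tendsto α₂ Filter.atTop Filter.atTop)
    (α₁inv : ℝ → ℝ)
    (hα₁inv : Set.InvOn α₁inv α₁ (Set.Ici 0) (Set.Ici 0))
    (ρ : ℝ → ℝ)
    (hρK : ContinuousOn ρ (Set.Ici 0) ∧ MonotoneOn ρ (Set.Ici 0) ∧ ρ 0 = 0)
    (μ : ℝ → ℝ)
    (hμ_int : ∀ a b : ℝ, IntervalIntegrable μ MeasureTheory.volume a b)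
    (α β : ℝ) (hα : 0 < α) (hβ : 0 ≤ β)
    (hμ_ues : ∀ t₀ ∈ Set.Ici tsharp, ∀ t ≥ t₀,
        (∫ s in t₀..t, μ s) ≤ -α * (t - t₀) + β)
    (hsandwich : ∀ t ∈ Set.Ici tsharp, ∀ x : EuclideanSpace ℝ (Fin n),
        α₁ ‖x‖ ≤ V t x ∧ V t x ≤ α₂ ‖x‖) :
    ∀ t₀ ∈ Set.Ici tsharp, ∀ u : ℝ → EuclideanSpace ℝ (Fin m),
      ∀ x : ℝ → EuclideanSpace ℝ (Fin n),
      -- `x` is a solution of `ẋ = f(t,x,u)` on `[t₀,∞)`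
      (∀ t ≥ t₀, HasDerivAt x (f t (x t) (u t)) t) →
      -- the input is locally (essentially) bounded
      (∀ a b : ℝ, BddAbove ((fun s => ‖u s‖) '' Set.Icc a b)) →
      -- along the solution, `V(t,x(t)) ≥ ρ(|u(t)|)` implies `V̇(t,x(t)) ≤ μ(t) V(t,x(t))`
      (∀ t ≥ t₀, ρ ‖u t‖ ≤ V t (x t) →
          (fderiv ℝ (fun p : ℝ × EuclideanSpace ℝ (Fin n) => V p.1 p.2) (t, x t))
            (1, f t (x t) (u t)) ≤ μ t * V t (x t)) →
      ∀ t ≥ t₀, ‖x t‖ ≤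
        α₁inv (2 * Real.exp β * α₂ ‖x t₀‖ * Real.exp (-α * (t - t₀))) +
        α₁inv (2 * Real.exp β * ρ (sSup ((fun s => ‖u s‖) '' Set.Icc t₀ t))) := by
  intro t₀ ht₀ u x hx hu hcond t htt
  obtain ⟨hα₁c, hα₁m, hα₁0, hα₁t⟩ := hα₁K
  set Vp := fun p : ℝ × EuclideanSpace ℝ (Fin n) => V p.1 p.2 with hVp_def
  set W := fun s : ℝ => V s (x s) with hW_def
  set Wd := fun s : ℝ => (fderiv ℝ Vp (s, x s)) (1, f s (x s) (u s)) with hWd_def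
  have hVdiff : Differentiable ℝ Vp := hV_C1.differentiable one_ne_zero
  have hW : ∀ s, t₀ ≤ s → HasDerivAt W (Wd s) s := by
    intro s hs
    have hγ : HasDerivAt (fun r : ℝ => (r, x r)) ((1 : ℝ), f s (x s) (u s)) s :=
      (hasDerivAt_id s).prodMk (hx s hs)
    exact (hVdiff (s, x s)).hasFDerivAt.comp_hasDerivAt s hγ
  have htt' : tsharp ≤ t := le_trans ht₀ htt
  set S := sSup ((fun s => ‖u s‖) '' Set.Icc t₀ t) with hS_def
  have hS0 : 0 ≤ S := by
    have hmem : ‖u t₀‖ ∈ (fun s => ‖u s‖) '' Set.Icc t₀ t := ⟨t₀, ⟨le_rfl, htt⟩, rfl⟩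
    exact le_trans (norm_nonneg (u t₀)) (le_csSup (hu t₀ t) hmem)
  set c := ρ S with hc_def
  have hc : 0 ≤ c := by
    have := hρK.2.1 (Set.self_mem_Ici) (Set.mem_Ici.2 hS0) hS0
    rw [hρK.2.2] at this
    exact this
  have hcond' : ∀ s ∈ Set.Icc t₀ t, c ≤ W s → Wd s ≤ μ s * W s := by
    intro s hs hcs
    have huS : ‖u s‖ ≤ S := le_csSup (hu t₀ t) ⟨s, hs, rfl⟩
    have hρle : ρ ‖u s‖ ≤ c := hρK.2.1 (Set.mem_Ici.2 (norm_nonneg _)) (Set.mem_Ici.2 hS0) huS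
    exact hcond s hs.1 (le_trans hρle hcs)
  have hμ_ues' : ∀ a, t₀ ≤ a → ∀ b, a ≤ b → (∫ s in a..b, μ s) ≤ -α * (b - a) + β :=
    fun a ha b hb => hμ_ues a (Set.mem_Ici.2 (le_trans ht₀ ha)) b hb
  have hWnn : 0 ≤ W t₀ := hV_nonneg t₀ ht₀ (x t₀)
  have hkey := stmt13_key htt hα hβ hW hWnn hμ_int hμ_ues' hc hcond'
  set P := 2 * Real.exp β * α₂ ‖x t₀‖ * Real.exp (-α * (t - t₀)) with hP_def
  set Q := 2 * Real.exp β * c with hQ_def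
  have hα₂nn : 0 ≤ α₂ ‖x t₀‖ := by
    have := (hα₂K.2.1.monotoneOn) Set.self_mem_Ici (Set.mem_Ici.2 (norm_nonneg (x t₀)))
      (norm_nonneg (x t₀))
    rwa [hα₂K.2.2.1] at this
  have hPnn : 0 ≤ P := by positivity
  have hQnn : 0 ≤ Q := by positivity
  have hsand_t₀ := hsandwich t₀ ht₀ (x t₀)
  have hA : Real.exp (β - α * (t - t₀)) * W t₀ ≤ P := by
    rw [hP_def, show β - α * (t - t₀) = β + -α * (t - t₀) by ring, Real.exp_add]
    nlinarith [Real.exp_pos β, Real.exp_pos (-α * (t - t₀)), hsand_t₀.2, hWnn,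
      mul_pos (Real.exp_pos β) (Real.exp_pos (-α * (t - t₀)))]
  have hB : Real.exp β * c ≤ Q := by
    rw [hQ_def]; nlinarith [Real.exp_pos β]
  have hmax : W t ≤ max P Q := le_trans hkey (max_le_max hA hB)
  have hsand_t := hsandwich t (Set.mem_Ici.2 htt') (x t)
  have hxtW : α₁ ‖x t‖ ≤ max P Q := le_trans hsand_t.1 hmax
  -- properties of α₁inv
  have hsurj : ∀ y : ℝ, 0 ≤ y → ∃ s, 0 ≤ s ∧ α₁ s = y := by
    intro y hy
    obtain ⟨b, hb1, hb2⟩ := ((hα₁t.eventually_ge_atTop y).and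
      (Filter.eventually_ge_atTop (0:ℝ))).exists
    have := intermediate_value_Icc hb2 (hα₁c.mono (Set.Icc_subset_Ici_self))
    have hmem : y ∈ Set.Icc (α₁ 0) (α₁ b) := ⟨by rw [hα₁0]; exact hy, hb1⟩
    obtain ⟨s, hs, hsy⟩ := this hmem
    exact ⟨s, hs.1, hsy⟩
  have hinv : ∀ y z : ℝ, 0 ≤ y → y ≤ z → 0 ≤ α₁inv y ∧ α₁inv y ≤ α₁inv z := by
    intro y z hy hyz
    obtain ⟨s, hs0, hsy⟩ := hsurj y hy
    obtain ⟨s', hs'0, hs'z⟩ := hsurj z (le_trans hy hyz)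
    have h1 : α₁inv y = s := by rw [← hsy]; exact hα₁inv.1 hs0
    have h2 : α₁inv z = s' := by rw [← hs'z]; exact hα₁inv.1 hs'0
    rw [h1, h2]
    refine ⟨hs0, ?_⟩
    by_contra hss
    push_neg at hss
    have := hα₁m hs'0 hs0 hss
    rw [hsy, hs'z] at this
    exact absurd hyz (not_le.2 this)
  have hxt : ‖x t‖ ≤ α₁inv (max P Q) := by
    have hxnn : 0 ≤ α₁ ‖x t‖ := by
      have := hα₁m.monotoneOn Set.self_mem_Ici (Set.mem_Ici.2 (norm_nonneg (x t)))
        (norm_nonneg (x t))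
      rwa [hα₁0] at this
    have hid : α₁inv (α₁ ‖x t‖) = ‖x t‖ := hα₁inv.1 (norm_nonneg (x t))
    have := (hinv _ _ hxnn hxtW).2
    rwa [hid] at this
  rcases max_cases P Q with ⟨hm, _⟩ | ⟨hm, _⟩
  · rw [hm] at hxt
    have := (hinv Q Q hQnn le_rfl).1
    linarith
  · rw [hm] at hxt
    have := (hinv P P hPnn le_rfl).1
    linarith
end

section
/- (Appendix A3) Let μ(t) = 2/(1+t) − t·|cos t| for t ≥ 0. Then ∫_{t₀}^{t} μ(s) ds ≤ −(4/(3π))(t−t₀) + 2·ln(1 + (3/2)π) + 2 for all t ≥ t₀ ≥ 0; in particular μ is uniformly exponentially stable. A key intermediate estimate is that ∫_{t}^{t+(3/2)π} μ(s) ds ≤ 2·ln(1 + (3/2)π) − (1 + (3/2)π) < −2 for every t ≥ 0. -/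
open Filter MeasureTheory Set

noncomputable abbrev mu (s : ℝ) : ℝ := 2 / (1 + s) - s * |Real.cos s|

lemma integ_scos (a b : ℝ) : IntervalIntegrable (fun s => s * |Real.cos s|) volume a b :=
  (continuous_id.mul Real.continuous_cos.abs).intervalIntegrable a b

lemma integ_inv {a b : ℝ} (ha : 0 ≤ a) (hb : 0 ≤ b) :
    IntervalIntegrable (fun s : ℝ => 2 / (1 + s)) volume a b := by
  apply ContinuousOn.intervalIntegrable
  apply ContinuousOn.div continuousOn_const (continuousOn_const.add continuousOn_id)
  intro x hx
  have : min a b ≤ x := hx.1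
  have : (0:ℝ) ≤ x := le_trans (le_min ha hb) this
  show (1:ℝ) + x ≠ 0
  positivity

lemma integ_mu {a b : ℝ} (ha : 0 ≤ a) (hb : 0 ≤ b) :
    IntervalIntegrable mu volume a b :=
  (integ_inv ha hb).sub (integ_scos a b)

lemma int_inv {a b : ℝ} (ha : 0 ≤ a) (hb : 0 ≤ b) :
    ∫ s in a..b, 2 / (1 + s) = 2 * (Real.log (1 + b) - Real.log (1 + a)) := by
  have h : ∀ x ∈ uIcc a b, HasDerivAt (fun s => 2 * Real.log (1 + s)) (2 / (1 + x)) x := by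
    intro x hx
    have hx0 : (0:ℝ) ≤ x := le_trans (le_min ha hb) hx.1
    have h1 : HasDerivAt (fun s : ℝ => 1 + s) 1 x := (hasDerivAt_id x).const_add 1
    have h2 := (h1.log (by positivity)).const_mul 2
    exact h2.congr_deriv (by ring)
  rw [intervalIntegral.integral_eq_sub_of_hasDerivAt h (integ_inv ha hb)]
  ring

lemma log_ratio {a b L : ℝ} (ha : 0 ≤ a) (hab : a ≤ b) (hL : b - a ≤ L) :
    Real.log (1 + b) - Real.log (1 + a) ≤ Real.log (1 + L) := by
  have hL0 : 0 ≤ L := le_trans (by linarith) hL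
  have h1 : (0:ℝ) < 1 + a := by linarith
  have h2 : (0:ℝ) < 1 + L := by linarith
  have key : (1 + b) ≤ (1 + a) * (1 + L) := by nlinarith
  have := Real.log_le_log (by linarith : (0:ℝ) < 1 + b) key
  rw [Real.log_mul (by positivity) (by positivity)] at this
  linarith

-- upper bound for ∫ mu over any [a,b] with 0 ≤ a ≤ b, b - a ≤ L
lemma int_mu_upper {a b L : ℝ} (ha : 0 ≤ a) (hab : a ≤ b) (hL : b - a ≤ L) :
    ∫ s in a..b, mu s ≤ 2 * Real.log (1 + L) := by
  have hb : 0 ≤ b := le_trans ha hab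
  have h1 : ∫ s in a..b, mu s ≤ ∫ s in a..b, 2 / (1 + s) := by
    apply intervalIntegral.integral_mono_on hab (integ_mu ha hb) (integ_inv ha hb)
    intro x hx
    have hx0 : 0 ≤ x := le_trans ha hx.1
    have : 0 ≤ x * |Real.cos x| := by positivity
    simp only [mu]; linarith
  rw [int_inv ha hb] at h1
  have := log_ratio ha hab hL
  linarith

lemma int_mid : ∫ s in (Real.pi/2)..(3*Real.pi/2), s * |Real.cos s| = 2 * Real.pi := by
  have hpi := Real.pi_pos
  have hcongr : EqOn (fun s => s * |Real.cos s|) (fun s => -(s * Real.cos s))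
      (uIcc (Real.pi/2) (3*Real.pi/2)) := by
    intro x hx
    rw [uIcc_of_le (by linarith)] at hx
    have hc : Real.cos x ≤ 0 :=
      Real.cos_nonpos_of_pi_div_two_le_of_le hx.1 (by linarith [hx.2])
    simp only [abs_of_nonpos hc]
    ring
  rw [intervalIntegral.integral_congr hcongr]
  have h : ∀ x ∈ uIcc (Real.pi/2) (3*Real.pi/2),
      HasDerivAt (fun s => -(s * Real.sin s + Real.cos s)) (-(x * Real.cos x)) x := by
    intro x _
    have h1 : HasDerivAt (fun s : ℝ => s * Real.sin s) (Real.sin x + x * Real.cos x) x := by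
      exact ((hasDerivAt_id' (x := x)).mul (Real.hasDerivAt_sin x)).congr_deriv (by ring)
    have h2 := (h1.add (Real.hasDerivAt_cos x)).neg
    exact h2.congr_deriv (by ring)
  rw [intervalIntegral.integral_eq_sub_of_hasDerivAt h
    ((continuous_id.mul Real.continuous_cos).neg.intervalIntegrable _ _)]
  have h32 : (3*Real.pi/2 : ℝ) = Real.pi/2 + Real.pi := by ring
  rw [h32, Real.sin_add_pi, Real.cos_add_pi]
  simp [Real.sin_pi_div_two, Real.cos_pi_div_two]
  ring

noncomputable def FF (s : ℝ) : ℝ := s^2/4 + s * Real.sin (2*s) / 4 + Real.cos (2*s) / 8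

lemma FF_deriv (x : ℝ) : HasDerivAt FF (x * Real.cos x ^ 2) x := by
  have h2x : HasDerivAt (fun s : ℝ => 2*s) 2 x := by
    simpa using (hasDerivAt_id x).const_mul 2
  have hsin : HasDerivAt (fun s : ℝ => Real.sin (2*s)) (Real.cos (2*x) * 2) x :=
    (Real.hasDerivAt_sin (2*x)).comp x h2x
  have hcos : HasDerivAt (fun s : ℝ => Real.cos (2*s)) (-Real.sin (2*x) * 2) x :=
    (Real.hasDerivAt_cos (2*x)).comp x h2x
  have hsq : HasDerivAt (fun s : ℝ => s^2/4) (2*x/4) x := by simpa using (hasDerivAt_pow 2 x).div_const 4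
  have hmul := ((hasDerivAt_id x).mul hsin).div_const 4
  have h := (hsq.add hmul).add (hcos.div_const 8)
  refine h.congr_deriv ?_
  simp only [id_eq]
  rw [Real.cos_two_mul x]; ring

lemma int_scos_sq (a b : ℝ) :
    ∫ s in a..b, s * Real.cos s ^ 2 = FF b - FF a := by
  apply intervalIntegral.integral_eq_sub_of_hasDerivAt (fun x _ => FF_deriv x)
  exact (continuous_id.mul (Real.continuous_cos.pow 2)).intervalIntegrable a b

lemma lower_bound {t : ℝ} (ht : 0 ≤ t) :
    1 + 3/2*Real.pi ≤ ∫ s in t..(t + 3/2*Real.pi), s * |Real.cos s| := by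
  have hpi := Real.pi_gt_d6
  have hpi0 := Real.pi_pos
  rcases le_or_gt t (Real.pi/2) with hcase | hcase
  · have hmono : ∫ s in (Real.pi/2)..(3*Real.pi/2), s * |Real.cos s| ≤
        ∫ s in t..(t + 3/2*Real.pi), s * |Real.cos s| := by
      apply intervalIntegral.integral_mono_interval hcase (by linarith) (by linarith)
      · filter_upwards [ae_restrict_mem measurableSet_Ioc] with x hx
        have : 0 ≤ x := le_trans ht hx.1.le
        positivity
      · exact (continuous_id.mul Real.continuous_cos.abs).intervalIntegrable _ _
    rw [int_mid] at hmono
    linarith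
  · have hmono : ∫ s in t..(t + 3/2*Real.pi), s * Real.cos s ^ 2 ≤
        ∫ s in t..(t + 3/2*Real.pi), s * |Real.cos s| := by
      apply intervalIntegral.integral_mono_on (by linarith)
        ((continuous_id.mul (Real.continuous_cos.pow 2)).intervalIntegrable _ _)
        ((continuous_id.mul Real.continuous_cos.abs).intervalIntegrable _ _)
      intro x hx
      show x * Real.cos x ^ 2 ≤ x * |Real.cos x|
      have hx0 : 0 ≤ x := le_trans ht hx.1
      have h1 : Real.cos x ^ 2 ≤ |Real.cos x| := by
        rw [← sq_abs]
        nlinarith [abs_nonneg (Real.cos x), Real.abs_cos_le_one x]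
      nlinarith
    rw [int_scos_sq] at hmono
    have e1 : 2*(t + 3/2*Real.pi) = 2*t + Real.pi + Real.pi + Real.pi := by ring
    have hFF : FF (t + 3/2*Real.pi) - FF t =
        ((2*t + 3/2*Real.pi) * (3/2*Real.pi - Real.sin (2*t)) - Real.cos (2*t)) / 4 := by
      simp only [FF, e1, Real.sin_add_pi, Real.cos_add_pi]
      ring
    rw [hFF] at hmono
    have hs1 : Real.sin (2*t) ≤ 1 := Real.sin_le_one _
    have hc1 : Real.cos (2*t) ≤ 1 := Real.cos_le_one _
    nlinarith [mul_le_mul (by linarith : Real.pi + 3/2*Real.pi ≤ 2*t + 3/2*Real.pi)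
      (by linarith : 3/2*Real.pi - 1 ≤ 3/2*Real.pi - Real.sin (2*t))
      (by linarith) (by linarith)]

lemma key_estimate {t : ℝ} (ht : 0 ≤ t) :
    ∫ s in t..(t + 3/2*Real.pi), mu s ≤
      2 * Real.log (1 + 3/2*Real.pi) - (1 + 3/2*Real.pi) := by
  have hpi := Real.pi_pos
  have hb : (0:ℝ) ≤ t + 3/2*Real.pi := by linarith
  have hsplit : ∫ s in t..(t + 3/2*Real.pi), mu s =
      (∫ s in t..(t + 3/2*Real.pi), 2/(1+s)) - ∫ s in t..(t + 3/2*Real.pi), s * |Real.cos s| :=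
    intervalIntegral.integral_sub (integ_inv ht hb) (integ_scos _ _)
  rw [hsplit, int_inv ht hb]
  have h1 := log_ratio ht (by linarith : t ≤ t + 3/2*Real.pi) (by linarith : (t + 3/2*Real.pi) - t ≤ 3/2*Real.pi)
  have h2 := lower_bound ht
  linarith

lemma numeric : 2 * Real.log (1 + 3/2*Real.pi) - (1 + 3/2*Real.pi) < -2 := by
  have hpi := Real.pi_gt_d6
  have hpi' := Real.pi_lt_d2
  have he : (2.7182818283:ℝ) < Real.exp 1 := Real.exp_one_gt_d9
  have he2 : (7.389056:ℝ) < Real.exp 2 := by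
    have : Real.exp 2 = Real.exp 1 * Real.exp 1 := by
      rw [← Real.exp_add]; norm_num
    nlinarith
  set x : ℝ := 1 + 3/2*Real.pi with hx
  have hx0 : (0:ℝ) < x := by rw [hx]; linarith
  have h1 : Real.log x - 2 = Real.log (x / Real.exp 2) := by
    rw [Real.log_div (ne_of_gt hx0) (ne_of_gt (Real.exp_pos 2)), Real.log_exp]
  have h2 : Real.log (x / Real.exp 2) ≤ x / Real.exp 2 - 1 :=
    Real.log_le_sub_one_of_pos (by positivity)
  have h3 : x / Real.exp 2 < x / 7.389056 := by
    apply div_lt_div_of_pos_left hx0 (by norm_num) he2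
  have h4 : x / 7.389056 < 0.7754 := by
    rw [div_lt_iff₀ (by norm_num)]
    rw [hx]; nlinarith
  have : Real.log x < 1.7754 := by linarith
  rw [hx] at *
  nlinarith

lemma chunks {t₀ : ℝ} (ht₀ : 0 ≤ t₀) (n : ℕ) :
    ∫ s in t₀..(t₀ + n * (3/2*Real.pi)), mu s ≤
      n * (2 * Real.log (1 + 3/2*Real.pi) - (1 + 3/2*Real.pi)) := by
  have hpi := Real.pi_pos
  induction n with
  | zero => simp
  | succ n ih =>
    have ha : (0:ℝ) ≤ t₀ + n * (3/2*Real.pi) := by positivity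
    have hb : (0:ℝ) ≤ t₀ + (n+1 : ℕ) * (3/2*Real.pi) := by positivity
    have hsplit : ∫ s in t₀..(t₀ + (n+1:ℕ) * (3/2*Real.pi)), mu s =
        (∫ s in t₀..(t₀ + n * (3/2*Real.pi)), mu s) +
        ∫ s in (t₀ + n * (3/2*Real.pi))..(t₀ + (n+1:ℕ) * (3/2*Real.pi)), mu s := by
      rw [intervalIntegral.integral_add_adjacent_intervals (integ_mu ht₀ ha) (integ_mu ha hb)]
    rw [hsplit]
    have he : t₀ + (n+1:ℕ) * (3/2*Real.pi) = (t₀ + n * (3/2*Real.pi)) + 3/2*Real.pi := by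
      push_cast; ring
    have hk : ∫ s in (t₀ + n * (3/2*Real.pi))..(t₀ + (n+1:ℕ) * (3/2*Real.pi)), mu s ≤
        2 * Real.log (1 + 3/2*Real.pi) - (1 + 3/2*Real.pi) := by
      rw [he]; exact key_estimate ha
    push_cast at hk ⊢
    linarith

lemma main_ineq {t₀ : ℝ} (ht₀ : 0 ≤ t₀) {t : ℝ} (ht : t₀ ≤ t) :
    ∫ s in t₀..t, mu s ≤
      -(4 / (3 * Real.pi)) * (t - t₀) + 2 * Real.log (1 + 3/2*Real.pi) + 2 := by
  have hpi := Real.pi_gt_d6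
  have hpi0 := Real.pi_pos
  set L : ℝ := 3/2*Real.pi with hLdef
  have hL0 : 0 < L := by positivity
  set n : ℕ := ⌊(t - t₀) / L⌋₊ with hn
  have hq0 : 0 ≤ (t - t₀)/L := div_nonneg (by linarith) hL0.le
  have h1 : (n:ℝ) ≤ (t - t₀)/L := Nat.floor_le hq0
  have h2 : (t - t₀)/L < n + 1 := Nat.lt_floor_add_one _
  have ha1 : t₀ + n * L ≤ t := by
    have := (mul_le_mul_of_nonneg_right h1 hL0.le)
    rw [div_mul_cancel₀ _ (ne_of_gt hL0)] at this
    linarith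
  have ha2 : t < t₀ + n * L + L := by
    have := (mul_lt_mul_of_pos_right h2 hL0)
    rw [div_mul_cancel₀ _ (ne_of_gt hL0)] at this
    linarith
  have ha : (0:ℝ) ≤ t₀ + n * L := by positivity
  have hsplit : ∫ s in t₀..t, mu s =
      (∫ s in t₀..(t₀ + n * L), mu s) + ∫ s in (t₀ + n * L)..t, mu s := by
    rw [intervalIntegral.integral_add_adjacent_intervals (integ_mu ht₀ ha)
      (integ_mu ha (le_trans ht₀ ht))]
  rw [hsplit]
  have hc := chunks ht₀ n
  rw [← hLdef] at hc
  have hrem : ∫ s in (t₀ + n * L)..t, mu s ≤ 2 * Real.log (1 + L) :=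
    int_mu_upper ha ha1 (by linarith)
  have hnum := numeric
  have hLn : (4 / (3 * Real.pi)) * (t - t₀) ≤ 2 * (n + 1) := by
    have h4 : (4 / (3 * Real.pi)) = 2 / L := by
      rw [hLdef]; field_simp; ring
    rw [h4]
    have : (t - t₀) / L ≤ n + 1 := by linarith
    calc 2 / L * (t - t₀) = 2 * ((t - t₀)/L) := by field_simp
    _ ≤ 2 * (n + 1) := by linarith
  have hcc : (n:ℝ) * (2 * Real.log (1 + L) - (1 + L)) ≤ -2 * n := by
    have : (0:ℝ) ≤ (n:ℝ) := Nat.cast_nonneg n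
    nlinarith
  linarith

/-- Appendix A3: for `μ(t) = 2/(1+t) - t |cos t|` on `[0,∞)`:
the key estimate `∫ s in t..(t + 3π/2), μ s ≤ 2 ln(1 + 3π/2) - (1 + 3π/2) < -2`
holds for every `t ≥ 0`, and
`∫ s in t₀..t, μ s ≤ -(4/(3π)) (t - t₀) + 2 ln(1 + 3π/2) + 2` for all `t ≥ t₀ ≥ 0`;
in particular `μ` is uniformly exponentially stable. -/
theorem stmt17 :
    -- key intermediate estimate
    (∀ t : ℝ, 0 ≤ t →
      (∫ s in t..(t + 3 / 2 * Real.pi), (2 / (1 + s) - s * |Real.cos s|)) ≤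
        2 * Real.log (1 + 3 / 2 * Real.pi) - (1 + 3 / 2 * Real.pi)) ∧
    (2 * Real.log (1 + 3 / 2 * Real.pi) - (1 + 3 / 2 * Real.pi) < -2) ∧
    -- main inequality (eq. (58)/(59))
    (∀ t₀ : ℝ, 0 ≤ t₀ → ∀ t ≥ t₀,
      (∫ s in t₀..t, (2 / (1 + s) - s * |Real.cos s|)) ≤
        -(4 / (3 * Real.pi)) * (t - t₀) + 2 * Real.log (1 + 3 / 2 * Real.pi) + 2) ∧
    -- in particular, μ is uniformly exponentially stable
    (∃ α : ℝ, 0 < α ∧ ∃ β : ℝ, 0 ≤ β ∧ ∀ t₀ : ℝ, 0 ≤ t₀ → ∀ t ≥ t₀,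
      (∫ s in t₀..t, (2 / (1 + s) - s * |Real.cos s|)) ≤ -α * (t - t₀) + β) := by
  have hpi := Real.pi_gt_d6
  refine ⟨fun t ht => key_estimate ht, numeric, fun t₀ ht₀ t ht => main_ineq ht₀ ht, ?_⟩
  refine ⟨4 / (3 * Real.pi), by positivity, 2 * Real.log (1 + 3 / 2 * Real.pi) + 2, ?_,
    fun t₀ ht₀ t ht => (main_ineq ht₀ ht).trans (le_of_eq (add_assoc _ _ _))⟩
  have h1 : (0:ℝ) ≤ Real.log (1 + 3 / 2 * Real.pi) := by
    apply Real.log_nonneg; linarith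
  linarith
end

section
/- (Example 1) Let t₀ > 1 and let x : [t₀,∞) → ℝ be continuously differentiable with ẋ(t) = −x(t)/(t + sin x(t)) for all t ≥ t₀ (note t + sin x > 0 for t > 1, so the right-hand side is well defined). Then |x(t)| ≤ |x(t₀)|·(1+t₀)/(1+t) for all t ≥ t₀; in particular every solution converges to 0 as t → ∞. -/
open Filter MeasureTheory Set

/-- Example 1: if `t₀ > 1` and `x : [t₀,∞) → ℝ` is a solution of
`ẋ = -x/(t + sin x)`, then `|x t| ≤ |x t₀| * (1 + t₀)/(1 + t)` for all `t ≥ t₀`;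
in particular every solution converges to `0` as `t → ∞`. -/
theorem stmt18 (t₀ : ℝ) (ht₀ : 1 < t₀) (x : ℝ → ℝ)
    (hx : ∀ t ≥ t₀, HasDerivAt x (-(x t) / (t + Real.sin (x t))) t) :
    (∀ t ≥ t₀, |x t| ≤ |x t₀| * ((1 + t₀) / (1 + t))) ∧
    Filter.Tendsto x Filter.atTop (nhds 0) := by
  set g : ℝ → ℝ := fun t => ((1 + t) * x t) ^ 2 with hg_def
  have hs : ∀ t ≥ t₀, (0:ℝ) < t + Real.sin (x t) := by
    intro t ht
    have := Real.neg_one_le_sin (x t)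
    linarith
  have hg : ∀ t ≥ t₀, HasDerivAt g
      (2 * ((1 + t) * x t) * (1 * x t + (1 + t) * (-(x t) / (t + Real.sin (x t))))) t := by
    intro t ht
    have h1 : HasDerivAt (fun t : ℝ => 1 + t) 1 t := by
      simpa using (hasDerivAt_id t).const_add 1
    have h2 : HasDerivAt (fun t => (1 + t) * x t)
        (1 * x t + (1 + t) * (-(x t) / (t + Real.sin (x t)))) t := h1.mul (hx t ht)
    have h3 := h2.fun_pow 2
    refine h3.congr_deriv ?_
    push_cast
    ring
  have hderiv_nonpos : ∀ t ∈ interior (Ici t₀), deriv g t ≤ 0 := by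
    intro t ht
    rw [interior_Ici] at ht
    have ht' : t₀ ≤ t := le_of_lt ht
    rw [(hg t ht').deriv]
    have hst := hs t ht'
    have hsin : Real.sin (x t) ≤ 1 := Real.sin_le_one (x t)
    have key : 1 * x t + (1 + t) * (-(x t) / (t + Real.sin (x t)))
        = x t * (Real.sin (x t) - 1) / (t + Real.sin (x t)) := by
      field_simp
      ring
    rw [key]
    rw [show 2 * ((1 + t) * x t) * (x t * (Real.sin (x t) - 1) / (t + Real.sin (x t)))
        = (2 * (1 + t) * (x t * x t) * (Real.sin (x t) - 1)) / (t + Real.sin (x t)) from by ring]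
    apply div_nonpos_of_nonpos_of_nonneg _ hst.le
    have h1t : (0:ℝ) < 1 + t := by linarith
    nlinarith [mul_nonneg (mul_nonneg (by linarith : (0:ℝ) ≤ 2 * (1 + t))
      (mul_self_nonneg (x t))) (by linarith : (0:ℝ) ≤ 1 - Real.sin (x t))]
  have hcont : ContinuousOn g (Ici t₀) := fun t ht =>
    (hg t ht).continuousAt.continuousWithinAt
  have hanti : AntitoneOn g (Ici t₀) :=
    antitoneOn_of_deriv_nonpos (convex_Ici t₀) hcont
      (fun t ht => by
        rw [interior_Ici] at ht
        exact (hg t ht.le).differentiableAt.differentiableWithinAt) hderiv_nonpos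
  have hbound : ∀ t ≥ t₀, |x t| ≤ |x t₀| * ((1 + t₀) / (1 + t)) := by
    intro t ht
    have hle : g t ≤ g t₀ := hanti self_mem_Ici ht ht
    have habs : |(1 + t) * x t| ≤ |(1 + t₀) * x t₀| := by
      have hle2 : ((1 + t) * x t) ^ 2 ≤ ((1 + t₀) * x t₀) ^ 2 := hle
      have := Real.sqrt_le_sqrt hle2
      simpa [Real.sqrt_sq_eq_abs] using this
    rw [abs_mul, abs_mul] at habs
    have h1t : (0:ℝ) < 1 + t := by linarith
    have h1t0 : (0:ℝ) < 1 + t₀ := by linarith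
    rw [abs_of_pos h1t, abs_of_pos h1t0] at habs
    rw [mul_div_assoc', le_div_iff₀ h1t]
    nlinarith [habs]
  refine ⟨hbound, ?_⟩
  have htend : Tendsto (fun t : ℝ => |x t₀| * ((1 + t₀) / (1 + t))) atTop (nhds 0) := by
    have : Tendsto (fun t : ℝ => (1 + t)) atTop atTop :=
      tendsto_atTop_add_const_left _ 1 tendsto_id
    have h2 : Tendsto (fun t : ℝ => (1 + t₀) / (1 + t)) atTop (nhds 0) :=
      Tendsto.div_atTop tendsto_const_nhds this
    simpa using h2.const_mul (|x t₀|)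
  have habs : Tendsto (fun t => |x t|) atTop (nhds 0) := by
    apply squeeze_zero' (Filter.eventually_atTop.2 ⟨t₀, fun t ht => abs_nonneg _⟩)
      (Filter.eventually_atTop.2 ⟨t₀, fun t ht => hbound t ht⟩) htend
  exact tendsto_zero_iff_abs_tendsto_zero x |>.2 habs
end

section
/- (Example 2) Let k ≥ 1 and r ≥ 1 be integers and let t₀ ≥ 0. Let (x₁,x₂) : [t₀,∞) → ℝ² be continuously differentiable with ẋ₁(t) = −x₁(t)/(1+t) + t²·x₂(t)^{2k−1} − t·x₁(t)^{2r−1} and ẋ₂(t) = −x₂(t)/(1+t) − t²·x₁(t)^{2k−1} − t·x₂(t)^{2r−1} for all t ≥ t₀. Then the Euclidean norm |x(t)| = (x₁(t)² + x₂(t)²)^{1/2} satisfies |x(t)| ≤ 2^{(k−1)/(2k)}·|x(t₀)|·(1+t₀)/(1+t)^{1−1/(2k)} for all t ≥ t₀; in particular the system is globally asymptotically stable. -/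
open Filter MeasureTheory Set

/-- Example 2: for integers `k ≥ 1`, `r ≥ 1`, `t₀ ≥ 0`, every
solution `(x₁, x₂)` of
`ẋ₁ = -x₁/(1+t) + t² x₂^{2k-1} - t x₁^{2r-1}`,
`ẋ₂ = -x₂/(1+t) - t² x₁^{2k-1} - t x₂^{2r-1}`
satisfies `|x(t)| ≤ 2^{(k-1)/(2k)} |x(t₀)| (1+t₀) / (1+t)^{1-1/(2k)}` for all
`t ≥ t₀`, where `|x(t)| = √(x₁(t)² + x₂(t)²)`; in particular the system is
globally asymptotically stable. -/
theorem stmt19 (k r : ℕ) (hk : 1 ≤ k) (hr : 1 ≤ r) (t₀ : ℝ) (ht₀ : 0 ≤ t₀)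
    (x₁ x₂ : ℝ → ℝ)
    (hx₁ : ∀ t ≥ t₀, HasDerivAt x₁
      (-(x₁ t) / (1 + t) + t ^ 2 * (x₂ t) ^ (2 * k - 1) - t * (x₁ t) ^ (2 * r - 1)) t)
    (hx₂ : ∀ t ≥ t₀, HasDerivAt x₂
      (-(x₂ t) / (1 + t) - t ^ 2 * (x₁ t) ^ (2 * k - 1) - t * (x₂ t) ^ (2 * r - 1)) t) :
    ∀ t ≥ t₀, Real.sqrt ((x₁ t) ^ 2 + (x₂ t) ^ 2) ≤
      (2 : ℝ) ^ (((k : ℝ) - 1) / (2 * (k : ℝ))) *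
        Real.sqrt ((x₁ t₀) ^ 2 + (x₂ t₀) ^ 2) * (1 + t₀) /
          (1 + t) ^ (1 - 1 / (2 * (k : ℝ))) := by
  obtain ⟨K, rfl⟩ : ∃ K, k = K + 1 := ⟨k - 1, by omega⟩
  obtain ⟨R, rfl⟩ : ∃ R, r = R + 1 := ⟨r - 1, by omega⟩
  simp only [show 2 * (K + 1) - 1 = 2 * K + 1 from by omega,
    show 2 * (R + 1) - 1 = 2 * R + 1 from by omega] at hx₁ hx₂
  set W : ℝ → ℝ := fun s => x₁ s ^ (2 * K + 2) + x₂ s ^ (2 * K + 2) with hWdef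
  set g : ℝ → ℝ := fun s => (1 + s) ^ (2 * K + 2) * W s with hgdef
  -- derivative of g
  have hg : ∀ s ∈ Ici t₀, HasDerivAt g
      (-((2 * K + 2 : ℕ) : ℝ) * s * (1 + s) ^ (2 * K + 2) *
        ((x₁ s ^ (K + R + 1)) ^ 2 + (x₂ s ^ (K + R + 1)) ^ 2)) s := by
    intro s hs
    have hs0 : (0:ℝ) ≤ s := le_trans ht₀ hs
    have h1s : (0:ℝ) < 1 + s := by linarith
    have hp : HasDerivAt (fun u : ℝ => (1 + u) ^ (2 * K + 2))
        (((2 * K + 2 : ℕ) : ℝ) * (1 + s) ^ (2 * K + 1) * 1) s := by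
      have := ((hasDerivAt_id s).const_add 1).pow (2 * K + 2)
      simpa [Pi.pow_def] using this
    have hW1 : HasDerivAt (fun u => x₁ u ^ (2 * K + 2))
        (((2 * K + 2 : ℕ) : ℝ) * x₁ s ^ (2 * K + 1) *
          (-(x₁ s) / (1 + s) + s ^ 2 * (x₂ s) ^ (2 * K + 1) - s * (x₁ s) ^ (2 * R + 1))) s := by
      simpa [Pi.pow_def] using (hx₁ s hs).pow (2 * K + 2)
    have hW2 : HasDerivAt (fun u => x₂ u ^ (2 * K + 2))
        (((2 * K + 2 : ℕ) : ℝ) * x₂ s ^ (2 * K + 1) *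
          (-(x₂ s) / (1 + s) - s ^ 2 * (x₁ s) ^ (2 * K + 1) - s * (x₂ s) ^ (2 * R + 1))) s := by
      simpa [Pi.pow_def] using (hx₂ s hs).pow (2 * K + 2)
    have hWd := hW1.add hW2
    have := hp.mul hWd
    refine this.congr_deriv ?_
    simp only [Pi.add_apply]
    have h1s' : (1 + s) ≠ 0 := ne_of_gt h1s
    field_simp
    ring
  have hanti : AntitoneOn g (Ici t₀) := by
    apply antitoneOn_of_deriv_nonpos (convex_Ici t₀)
    · exact fun s hs => (hg s hs).continuousAt.continuousWithinAt
    · intro s hs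
      rw [interior_Ici] at hs
      exact (hg s (show t₀ ≤ s from le_of_lt hs)).differentiableAt.differentiableWithinAt
    · intro s hs
      rw [interior_Ici] at hs
      rw [(hg s (show t₀ ≤ s from hs.le)).deriv]
      have hs0 : (0:ℝ) ≤ s := le_trans ht₀ hs.le
      have h1s : (0:ℝ) ≤ 1 + s := by linarith
      have : (0:ℝ) ≤ ((2 * K + 2 : ℕ) : ℝ) * s * (1 + s) ^ (2 * K + 2) *
          ((x₁ s ^ (K + R + 1)) ^ 2 + (x₂ s ^ (K + R + 1)) ^ 2) := by positivity
      linarith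
  intro t ht
  have key : g t ≤ g t₀ := hanti Set.self_mem_Ici ht ht
  set A : ℝ := x₁ t₀ ^ 2 + x₂ t₀ ^ 2 with hA
  set B : ℝ := x₁ t ^ 2 + x₂ t ^ 2 with hB
  have hA0 : 0 ≤ A := by positivity
  have hB0 : 0 ≤ B := by positivity
  have hu : (1:ℝ) ≤ 1 + t₀ := by linarith
  have hv : (1:ℝ) ≤ 1 + t := by linarith [le_trans ht₀ ht]
  have hu0 : (0:ℝ) < 1 + t₀ := by linarith
  have hv0 : (0:ℝ) < 1 + t := by linarith
  have hpw : ∀ y : ℝ, 0 ≤ y ^ (2 * K + 2) := fun y => by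
    rw [show 2 * K + 2 = (K + 1) * 2 from by ring, pow_mul]; exact sq_nonneg _
  have hWt0 : 0 ≤ W t := by simp only [hWdef]; exact add_nonneg (hpw _) (hpw _)
  have hWt00 : 0 ≤ W t₀ := by simp only [hWdef]; exact add_nonneg (hpw _) (hpw _)
  have hBk : B ^ (K + 1) ≤ 2 ^ K * W t := by
    have h := add_pow_le (sq_nonneg (x₁ t)) (sq_nonneg (x₂ t)) (K + 1)
    simp only [Nat.add_sub_cancel] at h
    calc B ^ (K + 1) ≤ 2 ^ K * ((x₁ t ^ 2) ^ (K + 1) + (x₂ t ^ 2) ^ (K + 1)) := h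
      _ = 2 ^ K * W t := by simp only [hWdef, ← pow_mul]; ring_nf
  have hWA : W t₀ ≤ A ^ (K + 1) := by
    have h := pow_add_pow_le (sq_nonneg (x₁ t₀)) (sq_nonneg (x₂ t₀)) (Nat.succ_ne_zero K)
    calc W t₀ = (x₁ t₀ ^ 2) ^ (K + 1) + (x₂ t₀ ^ 2) ^ (K + 1) := by
          simp only [hWdef, ← pow_mul]; ring_nf
      _ ≤ A ^ (K + 1) := h
  have keyWt : (1 + t) ^ (2 * K + 2) * W t ≤ (1 + t₀) ^ (2 * K + 2) * W t₀ := key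
  have main : B ^ (K + 1) * (1 + t) ^ (2 * K + 1) ≤
      2 ^ K * A ^ (K + 1) * (1 + t₀) ^ (2 * K + 2) := by
    have hvp : (0:ℝ) ≤ (1 + t) ^ (2 * K + 1) := pow_nonneg hv0.le _
    have hup : (0:ℝ) ≤ (1 + t₀) ^ (2 * K + 2) := pow_nonneg hu0.le _
    have h2K : (0:ℝ) ≤ 2 ^ K := by positivity
    calc B ^ (K + 1) * (1 + t) ^ (2 * K + 1)
        ≤ (2 ^ K * W t) * (1 + t) ^ (2 * K + 1) := mul_le_mul_of_nonneg_right hBk hvp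
      _ = 2 ^ K * (W t * (1 + t) ^ (2 * K + 1)) := by ring
      _ ≤ 2 ^ K * (W t * (1 + t) ^ (2 * K + 2)) := by
          refine mul_le_mul_of_nonneg_left (mul_le_mul_of_nonneg_left ?_ hWt0) h2K
          exact pow_le_pow_right₀ hv (by omega)
      _ = 2 ^ K * ((1 + t) ^ (2 * K + 2) * W t) := by ring
      _ ≤ 2 ^ K * ((1 + t₀) ^ (2 * K + 2) * W t₀) := mul_le_mul_of_nonneg_left keyWt h2K
      _ ≤ 2 ^ K * ((1 + t₀) ^ (2 * K + 2) * A ^ (K + 1)) :=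
          mul_le_mul_of_nonneg_left (mul_le_mul_of_nonneg_left hWA hup) h2K
      _ = 2 ^ K * A ^ (K + 1) * (1 + t₀) ^ (2 * K + 2) := by ring
  -- rpow bookkeeping
  set kR : ℝ := ((K + 1 : ℕ) : ℝ) with hkR
  have hkR1 : (1:ℝ) ≤ kR := by rw [hkR]; push_cast; linarith
  have hkR0 : (0:ℝ) < 2 * kR := by linarith
  set e : ℝ := 1 - 1 / (2 * kR) with he
  set c : ℝ := (2:ℝ) ^ ((kR - 1) / (2 * kR)) with hc
  have hc0 : 0 ≤ c := Real.rpow_nonneg (by norm_num) _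
  have hve : (0:ℝ) < (1 + t) ^ e := Real.rpow_pos_of_pos hv0 e
  show Real.sqrt B ≤ c * Real.sqrt A * (1 + t₀) / (1 + t) ^ e
  rw [le_div_iff₀ hve]
  have hsb : (Real.sqrt B) ^ (2 * K + 2) = B ^ (K + 1) := by
    rw [show 2 * K + 2 = 2 * (K + 1) from by ring, pow_mul, Real.sq_sqrt hB0]
  have hsa : (Real.sqrt A) ^ (2 * K + 2) = A ^ (K + 1) := by
    rw [show 2 * K + 2 = 2 * (K + 1) from by ring, pow_mul, Real.sq_sqrt hA0]
  have hne : (2:ℝ) * kR ≠ 0 := ne_of_gt hkR0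
  have hvee : ((1 + t) ^ e) ^ (2 * K + 2) = (1 + t) ^ (2 * K + 1) := by
    have h1 : ((1 + t) ^ e) ^ ((2 * K + 2 : ℕ) : ℝ) = (1 + t) ^ (e * ((2 * K + 2 : ℕ) : ℝ)) :=
      (Real.rpow_mul hv0.le e _).symm
    have h2 : e * ((2 * K + 2 : ℕ) : ℝ) = ((2 * K + 1 : ℕ) : ℝ) := by
      have hKne : ((K:ℝ) + 1) ≠ 0 := by positivity
      rw [he, hkR]; push_cast; field_simp; ring
    calc ((1 + t) ^ e) ^ (2 * K + 2)
        = ((1 + t) ^ e) ^ ((2 * K + 2 : ℕ) : ℝ) := (Real.rpow_natCast _ _).symm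
      _ = (1 + t) ^ (((2 * K + 1 : ℕ) : ℝ)) := by rw [h1, h2]
      _ = (1 + t) ^ (2 * K + 1) := Real.rpow_natCast _ _
  have hce : c ^ (2 * K + 2) = 2 ^ K := by
    have h1 : c ^ ((2 * K + 2 : ℕ) : ℝ) = (2:ℝ) ^ ((kR - 1) / (2 * kR) * ((2 * K + 2 : ℕ) : ℝ)) := by
      rw [hc, ← Real.rpow_mul (by norm_num)]
    have h2 : (kR - 1) / (2 * kR) * ((2 * K + 2 : ℕ) : ℝ) = ((K : ℕ) : ℝ) := by
      rw [div_mul_eq_mul_div, div_eq_iff hne, hkR]; push_cast; ring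
    calc c ^ (2 * K + 2) = c ^ ((2 * K + 2 : ℕ) : ℝ) := (Real.rpow_natCast _ _).symm
      _ = (2:ℝ) ^ (((K : ℕ) : ℝ)) := by rw [h1, h2]
      _ = 2 ^ K := Real.rpow_natCast _ _
  refine le_of_pow_le_pow_left₀ (n := 2 * K + 2) (by omega) (by positivity) ?_
  calc (Real.sqrt B * (1 + t) ^ e) ^ (2 * K + 2)
      = B ^ (K + 1) * (1 + t) ^ (2 * K + 1) := by rw [mul_pow, hsb, hvee]
    _ ≤ 2 ^ K * A ^ (K + 1) * (1 + t₀) ^ (2 * K + 2) := main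
    _ = (c * Real.sqrt A * (1 + t₀)) ^ (2 * K + 2) := by rw [mul_pow, mul_pow, hsa, hce]
end
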